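/- arXiv:2304.01303 — 2 statements merged into one kernel-verified Lean document; each statement's English description precedes it below -/
import Mathlib

section
/- Let L ≥ 4 be an integer and let p, w, S and W be as in the explicit parallel-tempering construction and its permutation identification. Let P be any function assigning to each ordered pair (ξ, ξ̃) of permutations of {0,…,L} a value P(ξ,ξ̃) ∈ [0,1], such that P(ξ,ξ̃) = 0 unless ξ̃ = ξ or ξ̃ = s_j(ξ) for some j ∈ {1,…,L}. Then Σ over pairs (ξ, ξ̃) with ξ ∈ S and ξ̃ ∉ S of (w(ξ)/W) · P(ξ,ξ̃) is at most 4e · (L+1)^{2 − ⌊log₂ L⌋}. -/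
open scoped Classical

/-- The unnormalized weight `N(i,k) = γ^(2(i+1)k − k² + 1) + Σ_{r=0}^{L} γ^((2r+1)(i+1) − r² − r)`
with `γ = (L+1)³`, of the explicit parallel-tempering construction. -/
noncomputable def NPT (L i k : ℕ) : ℝ :=
  (((L : ℝ) + 1) ^ 3) ^ (2 * ((i : ℤ) + 1) * (k : ℤ) - (k : ℤ) ^ 2 + 1) +
    ∑ r ∈ Finset.range (L + 1),
      (((L : ℝ) + 1) ^ 3) ^ ((2 * (r : ℤ) + 1) * ((i : ℤ) + 1) - (r : ℤ) ^ 2 - (r : ℤ))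

/-- `p(i,k) = N(i,k) / Σ_{h=1}^{m} N(i,h)` with `m = L+1`: the probability vector of the
explicit parallel-tempering construction. -/
noncomputable def pPT (L i k : ℕ) : ℝ := NPT L i k / ∑ h ∈ Finset.Icc 1 (L + 1), NPT L i h

/-- The weight `w(σ) = Π_{i=0}^{L} p(i, σ(i)+1)` of a permutation `σ` of `{0,…,L}`
(states of the projected chain are identified with permutations). -/
noncomputable def wPT (L : ℕ) (σ : Equiv.Perm (Fin (L + 1))) : ℝ :=
  ∏ i : Fin (L + 1), pPT L (i : ℕ) ((σ i : ℕ) + 1)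

/-- `W = Σ_σ w(σ)`, the total weight over all permutations of `{0,…,L}`. -/
noncomputable def WPT (L : ℕ) : ℝ := ∑ σ : Equiv.Perm (Fin (L + 1)), wPT L σ

/-- `σ' = s_j(σ)` for some adjacent swap `s_j`, `j ∈ {1,…,L}`: `σ'` is obtained from `σ` by
exchanging the values at two adjacent positions `a` and `a+1`. -/
def adjStep {L : ℕ} (σ σ' : Equiv.Perm (Fin (L + 1))) : Prop :=
  ∃ a b : Fin (L + 1), (b : ℕ) = (a : ℕ) + 1 ∧ σ' = σ * Equiv.swap a b

/-- The set `S` of permutations reachable from the identity by adjacent swaps so that every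
intermediate permutation has at most `⌊log₂ L⌋ − 1` non-fixed points. -/
def SPT (L : ℕ) : Set (Equiv.Perm (Fin (L + 1))) :=
  {σ | ∃ (T : ℕ) (f : ℕ → Equiv.Perm (Fin (L + 1))), f 0 = 1 ∧ f T = σ ∧
    (∀ t < T, adjStep (f t) (f (t + 1))) ∧
    ∀ t ≤ T, ((Finset.univ.filter fun i => f t i ≠ i).card : ℤ) ≤ ⌊Real.logb 2 (L : ℝ)⌋ - 1}

namespace Stmt16Aux

/-- number of non-fixed points -/
noncomputable def dd {n : ℕ} (σ : Equiv.Perm (Fin n)) : ℕ :=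
  (Finset.univ.filter fun i => σ i ≠ i).card

lemma gamma_pos (L : ℕ) : (0:ℝ) < ((L : ℝ) + 1) ^ 3 := by positivity

lemma NPT_pos (L i k : ℕ) : 0 < NPT L i k := by
  have hγ := gamma_pos L
  have h1 : 0 < (((L:ℝ)+1)^3) ^ (2 * ((i:ℤ)+1) * (k:ℤ) - (k:ℤ)^2 + 1) := zpow_pos hγ _
  have h2 : (0:ℝ) ≤ ∑ r ∈ Finset.range (L+1),
      (((L : ℝ) + 1) ^ 3) ^ ((2 * (r : ℤ) + 1) * ((i : ℤ) + 1) - (r : ℤ) ^ 2 - (r : ℤ)) :=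
    Finset.sum_nonneg fun r _ => (zpow_pos hγ _).le
  unfold NPT; linarith

lemma Zsum_pos (L i : ℕ) : 0 < ∑ h ∈ Finset.Icc 1 (L + 1), NPT L i h :=
  Finset.sum_pos (fun h _ => NPT_pos L i h) ⟨1, by simp⟩

lemma pPT_pos (L i k : ℕ) : 0 < pPT L i k :=
  div_pos (NPT_pos L i k) (Zsum_pos L i)

lemma wPT_pos (L : ℕ) (σ : Equiv.Perm (Fin (L+1))) : 0 < wPT L σ :=
  Finset.prod_pos fun i _ => pPT_pos L _ _

lemma WPT_ge (L : ℕ) : wPT L 1 ≤ WPT L :=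
  Finset.single_le_sum (fun σ _ => (wPT_pos L σ).le) (Finset.mem_univ 1)

lemma WPT_pos (L : ℕ) : 0 < WPT L := lt_of_lt_of_le (wPT_pos L 1) (WPT_ge L)

/-- key per-site bound -/
lemma keyN (L i k : ℕ) (hk : k ≠ i + 1) :
    ((L:ℝ)+1)^3 * NPT L i k ≤ 4 * NPT L i (i+1) := by
  set G : ℝ := ((L:ℝ)+1)^3 with hGdef
  have hG0 : (0:ℝ) < G := gamma_pos L
  have hG1 : (1:ℝ) ≤ G := by
    have : (1:ℝ) ≤ (L:ℝ)+1 := by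
      have := Nat.cast_nonneg (α := ℝ) L; linarith
    calc (1:ℝ) = 1^3 := by norm_num
    _ ≤ ((L:ℝ)+1)^3 := by gcongr
  set S : ℤ := ((i:ℤ)+1)^2 with hSdef
  -- exponents of the sum part
  have hexp : ∀ r : ℕ, (2 * (r : ℤ) + 1) * ((i : ℤ) + 1) - (r : ℤ) ^ 2 - (r : ℤ) ≤ S := by
    intro r
    have h : ((i:ℤ)+1-(r:ℤ)) * (((i:ℤ)+1-(r:ℤ)) - 1) ≥ 0 := by
      rcases le_or_gt (r:ℤ) (i:ℤ) with h | h
      · nlinarith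
      · nlinarith
    simp only [hSdef]; nlinarith
  have hexp2 : ∀ r : ℕ, ¬ (r = i ∨ r = i + 1) →
      (2 * (r : ℤ) + 1) * ((i : ℤ) + 1) - (r : ℤ) ^ 2 - (r : ℤ) ≤ S - 2 := by
    intro r hr
    push_neg at hr
    have h : ((i:ℤ)+1-(r:ℤ)) * (((i:ℤ)+1-(r:ℤ)) - 1) ≥ 2 := by
      have h1 : (r:ℤ) ≠ (i:ℤ) := by exact_mod_cast fun h => hr.1 (by exact_mod_cast h)
      have h2 : (r:ℤ) ≠ (i:ℤ)+1 := by
        intro h; apply hr.2; have : (r:ℤ) = ((i+1:ℕ):ℤ) := by push_cast; linarith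
        exact_mod_cast this
      rcases lt_or_gt_of_ne h1 with h | h
      · have : (r:ℤ) ≤ (i:ℤ) - 1 := by omega
        nlinarith
      · have : (i:ℤ) + 2 ≤ (r:ℤ) := by omega
        nlinarith
    simp only [hSdef]; nlinarith
  -- the sum part C
  set C : ℝ := ∑ r ∈ Finset.range (L + 1),
      G ^ ((2 * (r : ℤ) + 1) * ((i : ℤ) + 1) - (r : ℤ) ^ 2 - (r : ℤ)) with hCdef
  have hC0 : 0 ≤ C := Finset.sum_nonneg fun r _ => (zpow_pos hG0 _).le
  have hGC : G * C ≤ 3 * G ^ (S + 1) := by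
    have hb : ∀ r ∈ Finset.range (L+1),
        G ^ ((2 * (r : ℤ) + 1) * ((i : ℤ) + 1) - (r : ℤ) ^ 2 - (r : ℤ) + 1)
          ≤ (if r = i ∨ r = i + 1 then G ^ (S+1) else G ^ (S - 1)) := by
      intro r _
      by_cases h : r = i ∨ r = i + 1
      · rw [if_pos h]
        exact zpow_le_zpow_right₀ hG1 (by have := hexp r; omega)
      · rw [if_neg h]
        exact zpow_le_zpow_right₀ hG1 (by have := hexp2 r h; omega)
    have h1 : G * C = ∑ r ∈ Finset.range (L+1),
        G ^ ((2 * (r : ℤ) + 1) * ((i : ℤ) + 1) - (r : ℤ) ^ 2 - (r : ℤ) + 1) := by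
      rw [hCdef, Finset.mul_sum]
      refine Finset.sum_congr rfl fun r _ => ?_
      rw [zpow_add_one₀ (ne_of_gt hG0)]; ring
    rw [h1]
    calc ∑ r ∈ Finset.range (L+1),
        G ^ ((2 * (r : ℤ) + 1) * ((i : ℤ) + 1) - (r : ℤ) ^ 2 - (r : ℤ) + 1)
        ≤ ∑ r ∈ Finset.range (L+1),
          (if r = i ∨ r = i + 1 then G ^ (S+1) else G ^ (S - 1)) :=
          Finset.sum_le_sum hb
      _ = (Finset.filter (fun r => r = i ∨ r = i + 1) (Finset.range (L+1))).card • G ^ (S+1)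
          + (Finset.filter (fun r => ¬(r = i ∨ r = i + 1)) (Finset.range (L+1))).card • G ^ (S-1) := by
          rw [Finset.sum_ite, Finset.sum_const, Finset.sum_const]
      _ ≤ 2 * G ^ (S+1) + (L+1 : ℝ) * G ^ (S-1) := by
          have hc1 : (Finset.filter (fun r => r = i ∨ r = i + 1) (Finset.range (L+1))).card ≤ 2 := by
            have : Finset.filter (fun r => r = i ∨ r = i + 1) (Finset.range (L+1)) ⊆ {i, i+1} := by
              intro r hr
              rcases (Finset.mem_filter.mp hr).2 with h | h <;> simp [h]
            calc _ ≤ ({i, i+1} : Finset ℕ).card := Finset.card_le_card this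
            _ ≤ 2 := Finset.card_insert_le _ _ |>.trans (by simp)
          have hc2 : (Finset.filter (fun r => ¬(r = i ∨ r = i + 1)) (Finset.range (L+1))).card ≤ L+1 := by
            calc _ ≤ (Finset.range (L+1)).card := Finset.card_filter_le _ _
            _ = L + 1 := Finset.card_range _
          have hp1 : (0:ℝ) ≤ G ^ (S+1) := (zpow_pos hG0 _).le
          have hp2 : (0:ℝ) ≤ G ^ (S-1) := (zpow_pos hG0 _).le
          rw [nsmul_eq_mul, nsmul_eq_mul]
          gcongr <;> [exact_mod_cast hc1; exact_mod_cast hc2]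
      _ ≤ 3 * G ^ (S+1) := by
          have hLG : ((L:ℝ)+1) * G ^ (S-1) ≤ G ^ (S+1) := by
            have h1 : ((L:ℝ)+1) ≤ G^2 := by
              rw [hGdef]
              have h2 : (1:ℝ) ≤ (L:ℝ)+1 := by
                have := Nat.cast_nonneg (α := ℝ) L; linarith
              calc (L:ℝ)+1 = ((L:ℝ)+1)^1 := by ring
              _ ≤ ((L:ℝ)+1)^6 := pow_le_pow_right₀ h2 (by norm_num)
              _ = (((L:ℝ)+1)^3)^2 := by ring
            calc ((L:ℝ)+1) * G ^ (S-1) ≤ G^2 * G ^ (S-1) :=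
                  mul_le_mul_of_nonneg_right h1 (zpow_pos hG0 _).le
            _ = G ^ (S+1) := by
                  rw [← zpow_natCast G 2, ← zpow_add₀ (ne_of_gt hG0)]; congr 1; ring
          linarith
  -- first term of N(i,k)
  have hfirst : G ^ (2 * ((i:ℤ)+1) * (k:ℤ) - (k:ℤ)^2 + 1 + 1) ≤ G ^ (S + 1) := by
    apply zpow_le_zpow_right₀ hG1
    have hne : (i:ℤ)+1-(k:ℤ) ≠ 0 := by
      intro h
      apply hk
      have : (k:ℤ) = ((i+1:ℕ):ℤ) := by push_cast; linarith
      exact_mod_cast this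
    have h1 : 1 ≤ ((i:ℤ)+1-(k:ℤ))^2 := by
      rcases lt_or_gt_of_ne hne with h | h <;> nlinarith
    simp only [hSdef]; nlinarith
  -- N(i,i+1) ≥ G^(S+1)
  have hlow : G ^ (S+1) ≤ NPT L i (i+1) := by
    unfold NPT
    have he : 2 * ((i:ℤ)+1) * ((i+1:ℕ):ℤ) - ((i+1:ℕ):ℤ)^2 + 1 = S + 1 := by
      simp only [hSdef]; push_cast; ring
    rw [he]
    have : (0:ℝ) ≤ ∑ r ∈ Finset.range (L + 1),
        G ^ ((2 * (r : ℤ) + 1) * ((i : ℤ) + 1) - (r : ℤ) ^ 2 - (r : ℤ)) := hC0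
    linarith [hC0]
  -- combine
  unfold NPT
  rw [← hCdef, ← hGdef]
  have expand : G * (G ^ (2 * ((i:ℤ)+1) * (k:ℤ) - (k:ℤ)^2 + 1) + C)
      = G ^ (2 * ((i:ℤ)+1) * (k:ℤ) - (k:ℤ)^2 + 1 + 1) + G * C := by
    conv_rhs => rw [zpow_add_one₀ (ne_of_gt hG0)]
    ring
  calc G * (G ^ (2 * ((i:ℤ)+1) * (k:ℤ) - (k:ℤ)^2 + 1) + C)
      = G ^ (2 * ((i:ℤ)+1) * (k:ℤ) - (k:ℤ)^2 + 1 + 1) + G * C := expand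
    _ ≤ G ^ (S+1) + 3 * G ^ (S+1) := by linarith
    _ = 4 * G ^ (S+1) := by ring
    _ ≤ 4 * NPT L i (i+1) := by linarith

lemma pPT_le (L i k : ℕ) (hk : k ≠ i + 1) :
    pPT L i k ≤ (4 / (((L:ℝ)+1)^3)) * pPT L i (i+1) := by
  have hZ := Zsum_pos L i
  have hG0 := gamma_pos L
  have hN : NPT L i k ≤ (4 / (((L:ℝ)+1)^3)) * NPT L i (i+1) := by
    rw [div_mul_eq_mul_div, le_div_iff₀ hG0, mul_comm]
    exact keyN L i k hk
  unfold pPT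
  rw [div_mul_div_comm, div_le_div_iff₀ hZ (by positivity)]
  have hkey := keyN L i k hk
  nlinarith [mul_le_mul_of_nonneg_right hkey hZ.le]

lemma wPT_le (L : ℕ) (ξ : Equiv.Perm (Fin (L+1))) :
    wPT L ξ ≤ (4 / (((L:ℝ)+1)^3)) ^ (dd ξ) * wPT L 1 := by
  set x : ℝ := 4 / (((L:ℝ)+1)^3) with hxdef
  have hx0 : 0 ≤ x := by positivity
  have hkey : ∀ i : Fin (L+1), pPT L (i:ℕ) ((ξ i : ℕ) + 1)
      ≤ (if ξ i = i then 1 else x) * pPT L (i:ℕ) ((i:ℕ)+1) := by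
    intro i
    by_cases h : ξ i = i
    · rw [if_pos h, h, one_mul]
    · rw [if_neg h]
      exact pPT_le L (i:ℕ) ((ξ i : ℕ) + 1) (by
        intro hc
        exact h (Fin.ext (by omega)))
  calc wPT L ξ ≤ ∏ i : Fin (L+1), ((if ξ i = i then 1 else x) * pPT L (i:ℕ) ((i:ℕ)+1)) :=
        Finset.prod_le_prod (fun i _ => (pPT_pos L _ _).le) (fun i _ => hkey i)
    _ = (∏ i : Fin (L+1), (if ξ i = i then 1 else x)) * ∏ i : Fin (L+1), pPT L (i:ℕ) ((i:ℕ)+1) :=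
        Finset.prod_mul_distrib
    _ = x ^ (dd ξ) * wPT L 1 := by
        have h1 : (∏ i : Fin (L+1), (if ξ i = i then 1 else x)) = x ^ dd ξ := by
          rw [Finset.prod_ite, Finset.prod_const, Finset.prod_const, one_pow, one_mul]
          unfold dd
          rfl
        have h2 : (∏ i : Fin (L+1), pPT L (i:ℕ) ((i:ℕ)+1)) = wPT L 1 := by
          unfold wPT
          exact (Finset.prod_congr rfl fun i _ => by simp).symm
        rw [h1, h2]

lemma image_nonfixed {n : ℕ} (σ : Equiv.Perm (Fin n)) :
    (Finset.univ.filter fun i => σ i ≠ i).image σ = (Finset.univ.filter fun i => σ i ≠ i) := by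
  apply Finset.eq_of_subset_of_card_le
  · intro x hx
    obtain ⟨a, ha, rfl⟩ := Finset.mem_image.mp hx
    have ha' : σ a ≠ a := (Finset.mem_filter.mp ha).2
    refine Finset.mem_filter.mpr ⟨Finset.mem_univ _, fun hc => ha' (σ.injective hc)⟩
  · rw [Finset.card_image_of_injective _ σ.injective]

lemma count_le (L d : ℕ) :
    ((Finset.univ.filter fun σ : Equiv.Perm (Fin (L+1)) => dd σ = d).card) ≤ (L+1)^d := by
  classical
  have hcard : ((Finset.univ : Finset (Fin d → Fin (L+1)))).card = (L+1)^d := by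
    simp [Finset.card_univ]
  rw [← hcard]
  set A : Equiv.Perm (Fin (L+1)) → Finset (Fin (L+1)) :=
    fun σ => Finset.univ.filter fun i => σ i ≠ i with hA
  refine Finset.card_le_card_of_injOn
    (fun σ => fun j : Fin d =>
      if h : (A σ).card = d then σ ((A σ).orderEmbOfFin h j) else ⟨0, Nat.succ_pos L⟩)
    (fun σ _ => Finset.mem_univ _) ?_
  intro σ hσ τ hτ hfe
  simp only [Finset.coe_filter, Set.mem_setOf_eq] at hσ hτ
  have hσc : (A σ).card = d := hσ.2
  have hτc : (A τ).card = d := hτ.2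
  simp only [hσc, hτc, dif_pos] at hfe
  have hfe' : ∀ j : Fin d, σ ((A σ).orderEmbOfFin hσc j) = τ ((A τ).orderEmbOfFin hτc j) :=
    fun j => congrFun hfe j
  have himg2 : ∀ ρ : Equiv.Perm (Fin (L+1)), (A ρ).image ρ = A ρ := fun ρ => image_nonfixed ρ
  -- A σ = A τ
  have hAeq : A σ = A τ := by
    have himg : ∀ (ρ : Equiv.Perm (Fin (L+1))) (h : (A ρ).card = d) (x : Fin (L+1)),
        x ∈ A ρ ↔ ∃ j : Fin d, (A ρ).orderEmbOfFin h j = x := by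
      intro ρ h x
      constructor
      · intro hx
        have : x ∈ Set.range ((A ρ).orderEmbOfFin h) := by
          rw [Finset.range_orderEmbOfFin]; exact_mod_cast hx
        obtain ⟨j, hj⟩ := this
        exact ⟨j, hj⟩
      · rintro ⟨j, rfl⟩
        exact Finset.orderEmbOfFin_mem _ _ _
    ext x
    constructor
    · intro hx
      -- x ∈ A σ; then σ⁻¹? use image stability: A σ = image σ (A σ)
      have hx' : x ∈ (A σ).image σ := by rw [himg2 σ]; exact hx
      obtain ⟨a, ha, rfl⟩ := Finset.mem_image.mp hx'
      obtain ⟨j, hj⟩ := (himg σ hσc a).mp ha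
      rw [← hj, hfe' j]
      have : (A τ).orderEmbOfFin hτc j ∈ A τ := Finset.orderEmbOfFin_mem _ _ _
      have h2 : τ ((A τ).orderEmbOfFin hτc j) ∈ (A τ).image τ := Finset.mem_image_of_mem _ this
      rwa [himg2 τ] at h2
    · intro hx
      have hx' : x ∈ (A τ).image τ := by rw [himg2 τ]; exact hx
      obtain ⟨a, ha, rfl⟩ := Finset.mem_image.mp hx'
      obtain ⟨j, hj⟩ := (himg τ hτc a).mp ha
      rw [← hj, ← hfe' j]
      have : (A σ).orderEmbOfFin hσc j ∈ A σ := Finset.orderEmbOfFin_mem _ _ _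
      have h2 : σ ((A σ).orderEmbOfFin hσc j) ∈ (A σ).image σ := Finset.mem_image_of_mem _ this
      rwa [himg2 σ] at h2
  -- the two order embeddings agree
  have hemb : (A σ).orderEmbOfFin hσc = (A τ).orderEmbOfFin hτc :=
    Finset.orderEmbOfFin_unique' hτc
      (fun j => by rw [← hAeq]; exact Finset.orderEmbOfFin_mem _ _ _)
  -- hence σ = τ
  apply Equiv.ext
  intro x
  by_cases hx : x ∈ A σ
  · have : x ∈ Set.range ((A σ).orderEmbOfFin hσc) := by
      rw [Finset.range_orderEmbOfFin]; exact_mod_cast hx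
    obtain ⟨j, rfl⟩ := this
    rw [hfe' j, hemb]
  · have hx1 : σ x = x := by
      by_contra hc
      exact hx (Finset.mem_filter.mpr ⟨Finset.mem_univ _, hc⟩)
    have hx2 : τ x = x := by
      by_contra hc
      rw [hAeq] at hx
      exact hx (Finset.mem_filter.mpr ⟨Finset.mem_univ _, hc⟩)
    rw [hx1, hx2]

lemma dd_mul_swap {n : ℕ} (ξ : Equiv.Perm (Fin (n+1))) (a b : Fin (n+1)) :
    dd (ξ * Equiv.swap a b) ≤ dd ξ + 2 := by
  classical
  have hsub : (Finset.univ.filter fun i => (ξ * Equiv.swap a b) i ≠ i)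
      ⊆ (Finset.univ.filter fun i => ξ i ≠ i) ∪ {a, b} := by
    intro i hi
    have hi' : (ξ * Equiv.swap a b) i ≠ i := (Finset.mem_filter.mp hi).2
    by_cases hia : i = a
    · exact Finset.mem_union_right _ (by simp [hia])
    by_cases hib : i = b
    · exact Finset.mem_union_right _ (by simp [hib])
    refine Finset.mem_union_left _ (Finset.mem_filter.mpr ⟨Finset.mem_univ _, ?_⟩)
    intro hc
    apply hi'
    rw [Equiv.Perm.mul_apply, Equiv.swap_apply_of_ne_of_ne hia hib, hc]
  calc dd (ξ * Equiv.swap a b) ≤ ((Finset.univ.filter fun i => ξ i ≠ i) ∪ {a, b}).card :=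
        Finset.card_le_card hsub
    _ ≤ (Finset.univ.filter fun i => ξ i ≠ i).card + ({a, b} : Finset (Fin (n+1))).card :=
        Finset.card_union_le _ _
    _ ≤ dd ξ + 2 := by
        have : ({a, b} : Finset (Fin (n+1))).card ≤ 2 :=
          (Finset.card_insert_le _ _).trans (by simp)
        unfold dd
        omega

lemma floor_logb (L : ℕ) : ⌊Real.logb 2 (L:ℝ)⌋ = (Nat.log 2 L : ℤ) := by
  rw [show ((2:ℝ)) = ((2:ℕ):ℝ) by norm_num, Real.floor_logb_natCast (Nat.cast_nonneg L),
    Int.log_natCast]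

lemma mem_S_dd (L : ℕ) {ξ : Equiv.Perm (Fin (L+1))} (hξ : ξ ∈ SPT L) :
    (dd ξ : ℤ) ≤ (Nat.log 2 L : ℤ) - 1 := by
  obtain ⟨T, f, h0, hT, hstep, hcard⟩ := hξ
  have := hcard T le_rfl
  rw [hT, floor_logb L] at this
  exact this

lemma extend_mem (L : ℕ) {ξ ξ' : Equiv.Perm (Fin (L+1))} (hξ : ξ ∈ SPT L)
    (hadj : adjStep ξ ξ') (hd : (dd ξ' : ℤ) ≤ (Nat.log 2 L : ℤ) - 1) : ξ' ∈ SPT L := by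
  obtain ⟨T, f, h0, hT, hstep, hcard⟩ := hξ
  refine ⟨T+1, fun t => if t ≤ T then f t else ξ', by simp [h0], by simp, ?_, ?_⟩
  · intro t ht
    by_cases h : t + 1 ≤ T
    · have ht' : t ≤ T := by omega
      simp only [if_pos ht', if_pos h]
      exact hstep t (by omega)
    · have heq : t = T := by omega
      subst heq
      simp only [if_pos le_rfl, if_neg h, hT]
      exact hadj
  · intro t ht
    by_cases h : t ≤ T
    · simp only [if_pos h]
      exact hcard t h
    · simp only [if_neg h, floor_logb L]
      exact hd

lemma nbr_card (L : ℕ) (ξ : Equiv.Perm (Fin (L+1))) :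
    (Finset.univ.filter fun ξ' => adjStep ξ ξ').card ≤ L := by
  classical
  have hsub : (Finset.univ.filter fun ξ' => adjStep ξ ξ')
      ⊆ Finset.image (fun a : Fin L => ξ * Equiv.swap a.castSucc a.succ) Finset.univ := by
    intro ξ' hξ'
    obtain ⟨a, b, hb, rfl⟩ := (Finset.mem_filter.mp hξ').2
    have hbl := b.isLt
    have ha : (a:ℕ) < L := by omega
    refine Finset.mem_image.mpr ⟨⟨(a:ℕ), ha⟩, Finset.mem_univ _, ?_⟩
    have e1 : (Fin.castSucc (⟨(a:ℕ), ha⟩ : Fin L)) = a := by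
      apply Fin.ext; simp
    have e2 : (Fin.succ (⟨(a:ℕ), ha⟩ : Fin L)) = b := by
      apply Fin.ext; simp [hb]
    rw [e1, e2]
  calc _ ≤ _ := Finset.card_le_card hsub
    _ ≤ (Finset.univ : Finset (Fin L)).card := Finset.card_image_le
    _ = L := by simp

lemma geom_aux (y : ℝ) (h0 : 0 ≤ y) (h1 : y ≤ 4/25) (N : ℕ) :
    ∑ j ∈ Finset.range N, y^j ≤ 25/21 := by
  induction N with
  | zero => norm_num
  | succ n ih =>
    rw [geom_sum_succ]
    have hs : 0 ≤ ∑ j ∈ Finset.range n, y^j :=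
      Finset.sum_nonneg fun j _ => pow_nonneg h0 j
    nlinarith

lemma tail_geom (y : ℝ) (h0 : 0 ≤ y) (h1 : y ≤ 4/25) (D n : ℕ) :
    ∑ d ∈ Finset.Icc D n, y^d ≤ y^D * (25/21) := by
  have hD0 : (0:ℝ) ≤ y^D := pow_nonneg h0 D
  have hpt : ∑ d ∈ Finset.Icc D n, y^d ≤ y^D * ∑ d ∈ Finset.Icc D n, y^(d-D) := by
    rw [Finset.mul_sum]
    apply Finset.sum_le_sum
    intro d hd
    have hDd : D ≤ d := (Finset.mem_Icc.mp hd).1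
    rw [← pow_add, Nat.add_sub_cancel' hDd]
  have hinj : ∀ p ∈ Finset.Icc D n, ∀ q ∈ Finset.Icc D n, p - D = q - D → p = q := by
    intro p hp q hq hpq
    have h1 := (Finset.mem_Icc.mp hp).1
    have h2 := (Finset.mem_Icc.mp hq).1
    omega
  have himg : ∑ j ∈ (Finset.Icc D n).image (fun d => d - D), y^j
      = ∑ d ∈ Finset.Icc D n, y^(d - D) := Finset.sum_image hinj
  have hmono : ∑ j ∈ (Finset.Icc D n).image (fun d => d - D), y^j
      ≤ ∑ j ∈ Finset.range (n+1), y^j := by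
    apply Finset.sum_le_sum_of_subset_of_nonneg
    · intro j hj
      obtain ⟨d, hd, rfl⟩ := Finset.mem_image.mp hj
      have := (Finset.mem_Icc.mp hd).2
      exact Finset.mem_range.mpr (by omega)
    · intro j _ _
      exact pow_nonneg h0 j
  calc ∑ d ∈ Finset.Icc D n, y^d ≤ y^D * ∑ d ∈ Finset.Icc D n, y^(d-D) := hpt
    _ = y^D * ∑ j ∈ (Finset.Icc D n).image (fun d => d - D), y^j := by rw [himg]
    _ ≤ y^D * ∑ j ∈ Finset.range (n+1), y^j := mul_le_mul_of_nonneg_left hmono hD0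
    _ ≤ y^D * (25/21) := mul_le_mul_of_nonneg_left (geom_aux y h0 h1 (n+1)) hD0

end Stmt16Aux

open Stmt16Aux

/-- for any `[0,1]`-valued kernel `P` supported on the diagonal and adjacent
swaps, `Σ_{ξ ∈ S, ξ̃ ∉ S} (w(ξ)/W) P(ξ,ξ̃) ≤ 4e(L+1)^{2 − ⌊log₂ L⌋}`. -/
theorem stmt_16 (L : ℕ) (hL : 4 ≤ L)
    (P : Equiv.Perm (Fin (L + 1)) → Equiv.Perm (Fin (L + 1)) → ℝ)
    (hP01 : ∀ ξ ξ', 0 ≤ P ξ ξ' ∧ P ξ ξ' ≤ 1)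
    (hloc : ∀ ξ ξ', ξ' ≠ ξ → ¬ adjStep ξ ξ' → P ξ ξ' = 0) :
    (∑ ξ ∈ Finset.univ.filter (fun ξ => ξ ∈ SPT L),
        ∑ ξ' ∈ Finset.univ.filter (fun ξ' => ξ' ∉ SPT L),
          wPT L ξ / WPT L * P ξ ξ') ≤
      4 * Real.exp 1 * ((L : ℝ) + 1) ^ ((2 : ℤ) - ⌊Real.logb 2 (L : ℝ)⌋) := by
  classical
  have hL1 : (1:ℝ) ≤ (L:ℝ) := by exact_mod_cast Nat.one_le_cast.mpr (by omega)
  have hQ1 : (1:ℝ) ≤ (L:ℝ) + 1 := by linarith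
  have hQ0 : (0:ℝ) < (L:ℝ) + 1 := by linarith
  set K := Nat.log 2 L with hKdef
  have hK2 : 2 ≤ K := by
    have : (2:ℕ)^2 ≤ L := by omega
    exact (Nat.le_log_iff_pow_le (by norm_num) (by omega)).mpr this
  set D := K - 2 with hDdef
  have hKD : K = D + 2 := by omega
  set x : ℝ := 4 / (((L:ℝ)+1)^3) with hxdef
  have hx0 : 0 ≤ x := by rw [hxdef]; positivity
  set fS := Finset.univ.filter (fun ξ : Equiv.Perm (Fin (L+1)) => ξ ∈ SPT L) with hfS
  set fN := Finset.univ.filter (fun ξ' : Equiv.Perm (Fin (L+1)) => ξ' ∉ SPT L) with hfN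
  have hWpos := WPT_pos L
  have hw1 := wPT_pos L 1
  -- weight ratio bound
  have hwW : ∀ ξ : Equiv.Perm (Fin (L+1)), wPT L ξ / WPT L ≤ x ^ (dd ξ) := by
    intro ξ
    have h1 : wPT L ξ / WPT L ≤ wPT L ξ / wPT L 1 :=
      div_le_div_of_nonneg_left (wPT_pos L ξ).le hw1 (WPT_ge L)
    refine h1.trans ?_
    rw [div_le_iff₀ hw1]
    exact wPT_le L ξ
  -- inner sum bounds
  have hinner_le : ∀ ξ ∈ SPT L, (∑ ξ' ∈ fN, P ξ ξ') ≤ (L:ℝ) := by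
    intro ξ hξ
    have hb : ∀ ξ' ∈ fN, P ξ ξ' ≤ (if adjStep ξ ξ' then (1:ℝ) else 0) := by
      intro ξ' hξ'
      have hne : ξ' ≠ ξ := by
        intro h; rw [h] at hξ'
        exact ((Finset.mem_filter.mp hξ').2) hξ
      by_cases h : adjStep ξ ξ'
      · rw [if_pos h]; exact (hP01 ξ ξ').2
      · rw [if_neg h, hloc ξ ξ' hne h]
    calc (∑ ξ' ∈ fN, P ξ ξ') ≤ ∑ ξ' ∈ fN, (if adjStep ξ ξ' then (1:ℝ) else 0) :=
        Finset.sum_le_sum hb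
      _ = ((fN.filter (fun ξ' => adjStep ξ ξ')).card : ℝ) := Finset.sum_boole _ _
      _ ≤ ((Finset.univ.filter (fun ξ' => adjStep ξ ξ')).card : ℝ) := by
          have : (fN.filter (fun ξ' => adjStep ξ ξ')) ⊆ Finset.univ.filter (fun ξ' => adjStep ξ ξ') := by
            intro z hz
            exact Finset.mem_filter.mpr ⟨Finset.mem_univ _, (Finset.mem_filter.mp hz).2⟩
          exact_mod_cast Nat.cast_le.mpr (Finset.card_le_card this)
      _ ≤ (L:ℝ) := by exact_mod_cast nbr_card L ξ
  have hinner0 : ∀ ξ ∈ SPT L, dd ξ < D → (∑ ξ' ∈ fN, P ξ ξ') = 0 := by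
    intro ξ hξ hd
    apply Finset.sum_eq_zero
    intro ξ' hξ'
    have hnot : ξ' ∉ SPT L := (Finset.mem_filter.mp hξ').2
    have hne : ξ' ≠ ξ := fun h => hnot (h ▸ hξ)
    apply hloc ξ ξ' hne
    intro hadj
    apply hnot
    have hdd : dd ξ' ≤ dd ξ + 2 := by
      obtain ⟨a, b, hb, rfl⟩ := hadj
      exact dd_mul_swap ξ a b
    apply extend_mem L hξ hadj
    omega
  have hfactor : ∀ ξ : Equiv.Perm (Fin (L+1)),
      (∑ ξ' ∈ fN, wPT L ξ / WPT L * P ξ ξ') = wPT L ξ / WPT L * ∑ ξ' ∈ fN, P ξ ξ' :=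
    fun ξ => (Finset.mul_sum _ _ _).symm
  -- main estimate step 1
  have main1 : (∑ ξ ∈ fS, ∑ ξ' ∈ fN, wPT L ξ / WPT L * P ξ ξ')
      ≤ ∑ ξ ∈ Finset.univ.filter (fun ξ : Equiv.Perm (Fin (L+1)) => D ≤ dd ξ), (L:ℝ) * x ^ (dd ξ) := by
    rw [← Finset.sum_filter_add_sum_filter_not fS (fun ξ => D ≤ dd ξ)]
    have h2 : ∑ ξ ∈ fS.filter (fun ξ => ¬ D ≤ dd ξ), ∑ ξ' ∈ fN, wPT L ξ / WPT L * P ξ ξ' = 0 := by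
      apply Finset.sum_eq_zero
      intro ξ hξ
      have hmem := Finset.mem_filter.mp hξ
      have hS : ξ ∈ SPT L := (Finset.mem_filter.mp hmem.1).2
      rw [hfactor ξ, hinner0 ξ hS (by omega), mul_zero]
    rw [h2, add_zero]
    calc ∑ ξ ∈ fS.filter (fun ξ => D ≤ dd ξ), ∑ ξ' ∈ fN, wPT L ξ / WPT L * P ξ ξ'
        ≤ ∑ ξ ∈ fS.filter (fun ξ => D ≤ dd ξ), (L:ℝ) * x ^ (dd ξ) := by
          apply Finset.sum_le_sum
          intro ξ hξ
          have hmem := Finset.mem_filter.mp hξ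
          have hS : ξ ∈ SPT L := (Finset.mem_filter.mp hmem.1).2
          rw [hfactor ξ]
          have hPn : 0 ≤ ∑ ξ' ∈ fN, P ξ ξ' := Finset.sum_nonneg fun ξ' _ => (hP01 ξ ξ').1
          calc wPT L ξ / WPT L * (∑ ξ' ∈ fN, P ξ ξ') ≤ x ^ (dd ξ) * (L:ℝ) :=
              mul_le_mul (hwW ξ) (hinner_le ξ hS) hPn (pow_nonneg hx0 _)
            _ = (L:ℝ) * x ^ (dd ξ) := mul_comm _ _
      _ ≤ ∑ ξ ∈ Finset.univ.filter (fun ξ : Equiv.Perm (Fin (L+1)) => D ≤ dd ξ), (L:ℝ) * x ^ (dd ξ) := by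
          apply Finset.sum_le_sum_of_subset_of_nonneg
          · intro ξ hξ
            exact Finset.mem_filter.mpr ⟨Finset.mem_univ _, (Finset.mem_filter.mp hξ).2⟩
          · intro ξ _ _
            exact mul_nonneg (Nat.cast_nonneg L) (pow_nonneg hx0 _)
  -- fiberwise counting
  have main2 : (∑ ξ ∈ Finset.univ.filter (fun ξ : Equiv.Perm (Fin (L+1)) => D ≤ dd ξ), x ^ (dd ξ))
      ≤ ∑ d ∈ Finset.Icc D (L+1), (((L:ℝ)+1) * x)^d := by
    have hmaps : ∀ ξ ∈ Finset.univ.filter (fun ξ : Equiv.Perm (Fin (L+1)) => D ≤ dd ξ),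
        dd ξ ∈ Finset.Icc D (L+1) := by
      intro ξ hξ
      refine Finset.mem_Icc.mpr ⟨(Finset.mem_filter.mp hξ).2, ?_⟩
      calc dd ξ ≤ (Finset.univ : Finset (Fin (L+1))).card := Finset.card_filter_le _ _
        _ = L + 1 := by simp
    rw [← Finset.sum_fiberwise_of_maps_to hmaps (fun ξ => x ^ (dd ξ))]
    apply Finset.sum_le_sum
    intro d hd
    have hconst : (∑ ξ ∈ (Finset.univ.filter (fun ξ : Equiv.Perm (Fin (L+1)) => D ≤ dd ξ)).filter
          (fun ξ => dd ξ = d), x ^ (dd ξ))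
        = ∑ ξ ∈ (Finset.univ.filter (fun ξ : Equiv.Perm (Fin (L+1)) => D ≤ dd ξ)).filter
          (fun ξ => dd ξ = d), x ^ d :=
      Finset.sum_congr rfl (fun ξ hξ => by rw [(Finset.mem_filter.mp hξ).2])
    rw [hconst, Finset.sum_const, nsmul_eq_mul]
    have hcard : ((Finset.univ.filter (fun ξ : Equiv.Perm (Fin (L+1)) => D ≤ dd ξ)).filter
        (fun ξ => dd ξ = d)).card ≤ (L+1)^d := by
      refine le_trans (Finset.card_le_card ?_) (count_le L d)
      intro ξ hξ
      exact Finset.mem_filter.mpr ⟨Finset.mem_univ _, (Finset.mem_filter.mp hξ).2⟩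
    calc (((Finset.univ.filter (fun ξ : Equiv.Perm (Fin (L+1)) => D ≤ dd ξ)).filter
          (fun ξ => dd ξ = d)).card : ℝ) * x ^ d
        ≤ (((L+1)^d : ℕ) : ℝ) * x ^ d :=
          mul_le_mul_of_nonneg_right (by exact_mod_cast hcard) (pow_nonneg hx0 d)
      _ = (((L:ℝ)+1) * x)^d := by
          rw [mul_pow]
          push_cast
          ring
  -- geometric bound
  have hy : ((L:ℝ)+1) * x = 4/(((L:ℝ)+1)^2) := by
    rw [hxdef]
    field_simp
  have hy0 : 0 ≤ ((L:ℝ)+1) * x := mul_nonneg hQ0.le hx0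
  have hy4 : ((L:ℝ)+1) * x ≤ 4/25 := by
    rw [hy]
    rw [div_le_div_iff₀ (by positivity) (by norm_num)]
    have hL4 : (4:ℝ) ≤ (L:ℝ) := by exact_mod_cast hL
    nlinarith
  have main3 : (∑ d ∈ Finset.Icc D (L+1), (((L:ℝ)+1) * x)^d)
      ≤ (((L:ℝ)+1) * x)^D * (25/21) :=
    tail_geom _ hy0 hy4 D (L+1)
  -- RHS rewriting
  have hRHS : ((L:ℝ)+1) ^ ((2:ℤ) - ⌊Real.logb 2 (L:ℝ)⌋) = ((((L:ℝ)+1)^D))⁻¹ := by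
    rw [floor_logb L, ← hKdef, show (2:ℤ) - (K:ℤ) = -(D:ℤ) by omega, zpow_neg, zpow_natCast]
  -- final numeric inequality
  have hfin : (L:ℝ) * ((((L:ℝ)+1) * x)^D * (25/21)) ≤ 4 * Real.exp 1 * ((((L:ℝ)+1)^D))⁻¹ := by
    have hQD : (0:ℝ) < ((L:ℝ)+1)^D := by positivity
    rw [mul_comm (4 * Real.exp 1) _, ← div_eq_inv_mul, le_div_iff₀ hQD]
    have hsplit : (((L:ℝ)+1) * x)^D * ((L:ℝ)+1)^D = (4/((L:ℝ)+1))^D := by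
      rw [← mul_pow]
      congr 1
      rw [hy]
      field_simp
    calc (L:ℝ) * ((((L:ℝ)+1) * x)^D * (25/21)) * ((L:ℝ)+1)^D
        = (L:ℝ) * ((((L:ℝ)+1) * x)^D * ((L:ℝ)+1)^D) * (25/21) := by ring
      _ = (L:ℝ) * (4/((L:ℝ)+1))^D * (25/21) := by rw [hsplit]
      _ ≤ 4 * Real.exp 1 := by
          -- L < 2^(D+3), 2^(D+2) ≤ L+1
          have hA : (L:ℝ) ≤ 2^(D+3) := by
            have h := Nat.lt_pow_succ_log_self (b := 2) (by norm_num) L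
            have h' : L < 2^(D+3) := by
              rw [show D + 3 = K + 1 by omega]
              exact h
            calc (L:ℝ) ≤ ((2^(D+3) : ℕ) : ℝ) := by exact_mod_cast h'.le
              _ = 2^(D+3) := by push_cast; ring
          have hB : (2:ℝ)^(D+2) ≤ (L:ℝ)+1 := by
            have h := Nat.pow_log_le_self 2 (show L ≠ 0 by omega)
            have h' : 2^(D+2) ≤ L := by rw [show D + 2 = K by omega]; exact h
            calc (2:ℝ)^(D+2) = ((2^(D+2) : ℕ) : ℝ) := by push_cast; ring
              _ ≤ (L:ℝ) := by exact_mod_cast h'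
              _ ≤ (L:ℝ)+1 := by linarith
          have hp2 : (0:ℝ) < (2:ℝ)^(D+2) := by positivity
          have hstep1 : (4/((L:ℝ)+1))^D ≤ (4/(2:ℝ)^(D+2))^D := by
            apply pow_le_pow_left₀ (by positivity)
            exact div_le_div_of_nonneg_left (by norm_num) hp2 hB
          have hstep2 : ((4:ℝ)/(2:ℝ)^(D+2))^D = ((2^D : ℝ))⁻¹^D := by
            congr 1
            rw [show (4:ℝ) = 2^2 by norm_num, pow_add]
            field_simp
          have hstep3 : (((2^D : ℝ))⁻¹)^D = ((2:ℝ)^(D*D))⁻¹ := by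
            rw [← inv_pow, ← pow_mul]
            exact inv_pow 2 (D*D)
          have hDD : D ≤ D * D := by
            rcases Nat.eq_zero_or_pos D with h | h
            · simp [h]
            · exact Nat.le_mul_of_pos_left D h
          have hmono : ((2:ℝ)^(D*D))⁻¹ ≤ ((2:ℝ)^D)⁻¹ := by
            apply inv_anti₀ (by positivity)
            exact pow_le_pow_right₀ (by norm_num) hDD
          have hfinal : (L:ℝ) * (4/((L:ℝ)+1))^D ≤ 8 := by
            have hc : (L:ℝ) * (4/((L:ℝ)+1))^D ≤ 2^(D+3) * ((2:ℝ)^D)⁻¹ := by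
              have h1 : (4/((L:ℝ)+1))^D ≤ ((2:ℝ)^D)⁻¹ := by
                calc (4/((L:ℝ)+1))^D ≤ (4/(2:ℝ)^(D+2))^D := hstep1
                  _ = ((2^D : ℝ))⁻¹^D := hstep2
                  _ = ((2:ℝ)^(D*D))⁻¹ := hstep3
                  _ ≤ ((2:ℝ)^D)⁻¹ := hmono
              have h2 : (0:ℝ) ≤ (4/((L:ℝ)+1))^D := by positivity
              exact mul_le_mul hA h1 h2 (by positivity)
            have h3 : (2:ℝ)^(D+3) * ((2:ℝ)^D)⁻¹ = 8 := by
              rw [pow_add]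
              field_simp
              ring
            linarith
          have hexp := Real.exp_one_gt_d9
          nlinarith [pow_nonneg (show (0:ℝ) ≤ 4/((L:ℝ)+1) by positivity) D]
  -- put everything together
  rw [hRHS]
  calc (∑ ξ ∈ fS, ∑ ξ' ∈ fN, wPT L ξ / WPT L * P ξ ξ')
      ≤ ∑ ξ ∈ Finset.univ.filter (fun ξ : Equiv.Perm (Fin (L+1)) => D ≤ dd ξ), (L:ℝ) * x ^ (dd ξ) := main1
    _ = (L:ℝ) * ∑ ξ ∈ Finset.univ.filter (fun ξ : Equiv.Perm (Fin (L+1)) => D ≤ dd ξ), x ^ (dd ξ) := by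
        rw [Finset.mul_sum]
    _ ≤ (L:ℝ) * ((((L:ℝ)+1) * x)^D * (25/21)) := by
        apply mul_le_mul_of_nonneg_left _ (by linarith)
        exact (main2.trans main3)
    _ ≤ 4 * Real.exp 1 * ((((L:ℝ)+1)^D))⁻¹ := hfin
end

section
/- There is an absolute constant C > 0 with the following property. Let L ≥ 1 and m ≥ 2 be integers, let p : {0,…,L} × {1,…,m} → (0,1] satisfy Σ_{k=1}^{m} p(i,k) = 1 for each i, define π̄(λ) = Π_{i=0}^{L} p(i, λ_i) for λ ∈ {1,…,m}^{L+1}, and set B = min over k ∈ {1,…,m} of Π_{i=1}^{L} min{1, p(i−1,k)/p(i,k)}. Let φ ∈ (0,1], and let Q be any transition matrix on {1,…,m}^{L+1} (nonnegative entries, rows summing to 1) that is reversible with respect to π̄ and satisfies Q(τ, (i−1 i)τ) ≥ φ²/(2L) for every state τ and every i ∈ {1,…,L}, where (i−1 i)τ denotes τ with coordinates i−1 and i exchanged. Define the transition matrix P₁ by P₁ = (1/2)Q + (1/(2(L+1)))R₀ + (1/2 − 1/(2(L+1)))I, where R₀(τ, τ') = p(0,k) if τ' = τ_{[0,k]} for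 some k (and 0 if τ' differs from τ in a coordinate other than 0), and I is the identity; and define the transition matrix P₂ by P₂(τ, τ_{[i,k]}) = (1/(L+1)) p(i,k) for each i ∈ {0,…,L} and k ∈ {1,…,m} (with the diagonal entry collecting the total mass of proposals that keep the state unchanged). Here τ_{[i,k]} denotes τ with coordinate i replaced by k. Then both P₁ and P₂ are reversible with respect to π̄, and for every f : {1,…,m}^{L+1} → ℝ, E_{P₂}(f) ≤ C · m³ · (L+1)^{1 + 2log₂3} · φ^{−2} · B^{−C(1 + log₂(L+1))} · E_{P₁}(f), where E_P(f) = (1/2) Σ_{τ,τ'} π̄(τ)P(τ,τ')(f(τ) − f(τ'))². -/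
set_option maxHeartbeats 1000000

open Finset Function

namespace S18

variable {L m : ℕ}

section Core

variable (p : Fin (L + 1) → Fin m → ℝ) (f : (Fin (L + 1) → Fin m) → ℝ)

noncomputable def piw (τ : Fin (L + 1) → Fin m) : ℝ := ∏ i, p i (τ i)

noncomputable def Wf (i : Fin (L + 1)) : ℝ :=
  ∑ τ : Fin (L + 1) → Fin m, ∑ k : Fin m,
    piw p τ * p i k * (f τ - f (Function.update τ i k)) ^ 2

noncomputable def Yf (x y : Fin (L + 1)) : ℝ :=
  ∑ σ : Fin (L + 1) → Fin m,
    (p y (σ x) * ∏ j ∈ univ.erase x, p j (σ j)) * (f σ - f (σ ∘ Equiv.swap x y)) ^ 2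

noncomputable def SQf (Q : (Fin (L + 1) → Fin m) → (Fin (L + 1) → Fin m) → ℝ) : ℝ :=
  ∑ τ : Fin (L + 1) → Fin m, ∑ τ' : Fin (L + 1) → Fin m,
    piw p τ * Q τ τ' * (f τ - f τ') ^ 2

lemma piw_pos (hp : ∀ i k, 0 < p i k) (τ : Fin (L + 1) → Fin m) : 0 < piw p τ :=
  Finset.prod_pos fun i _ => hp i (τ i)

lemma piw_split (x : Fin (L + 1)) (τ : Fin (L + 1) → Fin m) :
    piw p τ = p x (τ x) * ∏ j ∈ univ.erase x, p j (τ j) :=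
  (Finset.mul_prod_erase univ _ (mem_univ x)).symm

lemma piw_update (x : Fin (L + 1)) (u : Fin m) (τ : Fin (L + 1) → Fin m) :
    piw p (Function.update τ x u) = p x u * ∏ j ∈ univ.erase x, p j (τ j) := by
  rw [piw, ← Finset.mul_prod_erase univ _ (mem_univ x), Function.update_self]
  congr 1
  refine Finset.prod_congr rfl fun j hj => ?_
  rw [Function.update_of_ne (mem_erase.mp hj).1]

lemma prod_erase_split {x y : Fin (L + 1)} (hxy : y ≠ x) (g : Fin (L + 1) → ℝ) :
    ∏ j ∈ univ.erase x, g j = g y * ∏ j ∈ (univ.erase x).erase y, g j :=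
  (Finset.mul_prod_erase _ g (by simp [hxy])).symm

end Core

/-- key telescoping window bound: `B * p y k ≤ p x k` for `x ≤ y`. -/
lemma up_bound (p : Fin (L + 1) → Fin m → ℝ) (hp : ∀ i k, 0 < p i k)
    {Bv : ℝ} (hB0 : 0 ≤ Bv)
    (hB : ∀ k, Bv ≤ ∏ i : Fin L, min 1 (p i.castSucc k / p i.succ k))
    (k : Fin m) (x y : Fin (L + 1)) (hxy : x ≤ y) :
    Bv * p y k ≤ p x k := by
  have key : ∀ (b : ℕ) (hb : b ≤ L) (a : ℕ) (hab : a ≤ b),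
      (∏ i ∈ univ.filter (fun i : Fin L => a ≤ (i : ℕ) ∧ (i : ℕ) < b),
        (p i.castSucc k / p i.succ k))
        = p ⟨a, by omega⟩ k / p ⟨b, by omega⟩ k := by
    intro b
    induction b with
    | zero =>
        intro hb a hab
        interval_cases a
        rw [Finset.filter_false_of_mem (by intro i _; simp), Finset.prod_empty]
        rw [eq_comm, div_self (ne_of_gt (hp _ _))]
    | succ b ih =>
        intro hb a hab
        rcases Nat.lt_or_ge a (b+1) with h | h
        · have hab' : a ≤ b := by omega
          have hbL : b < L := by omega
          have hsplit : univ.filter (fun i : Fin L => a ≤ (i : ℕ) ∧ (i : ℕ) < b + 1)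
              = insert (⟨b, hbL⟩ : Fin L)
                  (univ.filter (fun i : Fin L => a ≤ (i : ℕ) ∧ (i : ℕ) < b)) := by
            ext i
            simp only [mem_filter, mem_univ, true_and, mem_insert, Fin.ext_iff]
            omega
          rw [hsplit, Finset.prod_insert (by simp), ih (by omega) a hab']
          have h1 : p (Fin.castSucc ⟨b, hbL⟩) k = p ⟨b, by omega⟩ k := rfl
          have h2 : p (Fin.succ ⟨b, hbL⟩) k = p ⟨b + 1, by omega⟩ k := rfl
          rw [h1, h2]
          have n1 : p (⟨b, by omega⟩ : Fin (L+1)) k ≠ 0 := ne_of_gt (hp _ _)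
          have n2 : p (⟨b+1, by omega⟩ : Fin (L+1)) k ≠ 0 := ne_of_gt (hp _ _)
          have n3 : p (⟨a, by omega⟩ : Fin (L+1)) k ≠ 0 := ne_of_gt (hp _ _)
          field_simp
        · have : a = b + 1 := by omega
          subst this
          rw [Finset.filter_false_of_mem (by intro i hi; simp only [not_and, not_lt]; omega), Finset.prod_empty]
          rw [eq_comm, div_self (ne_of_gt (hp _ _))]
  -- now compare Bv against the window product
  set S := univ.filter (fun i : Fin L => (x : ℕ) ≤ (i : ℕ) ∧ (i : ℕ) < (y : ℕ)) with hS
  have h1 : Bv ≤ ∏ i ∈ S, min 1 (p i.castSucc k / p i.succ k) := by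
    refine le_trans (hB k) ?_
    have hsplit := Finset.prod_filter_mul_prod_filter_not univ
      (fun i : Fin L => (x : ℕ) ≤ (i : ℕ) ∧ (i : ℕ) < (y : ℕ))
      (fun i : Fin L => min 1 (p i.castSucc k / p i.succ k))
    rw [← hsplit]
    have hles : (∏ i ∈ univ.filter (fun i : Fin L => ¬((x : ℕ) ≤ (i : ℕ) ∧ (i : ℕ) < (y : ℕ))),
        min 1 (p i.castSucc k / p i.succ k)) ≤ 1 := by
      refine Finset.prod_le_one (fun i _ => ?_) (fun i _ => min_le_left _ _)
      exact le_min zero_le_one (le_of_lt (div_pos (hp _ _) (hp _ _)))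
    have hpos : (0:ℝ) ≤ ∏ i ∈ S, min 1 (p i.castSucc k / p i.succ k) := by
      refine Finset.prod_nonneg (fun i _ => ?_)
      exact le_min zero_le_one (le_of_lt (div_pos (hp _ _) (hp _ _)))
    exact mul_le_of_le_one_right hpos hles
  have h2 : (∏ i ∈ S, min 1 (p i.castSucc k / p i.succ k)) ≤ ∏ i ∈ S, (p i.castSucc k / p i.succ k) := by
    refine Finset.prod_le_prod (fun i _ => ?_) (fun i _ => min_le_right _ _)
    exact le_min zero_le_one (le_of_lt (div_pos (hp _ _) (hp _ _)))
  have h3 : (∏ i ∈ S, (p i.castSucc k / p i.succ k)) = p x k / p y k := by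
    have hyL : (y : ℕ) ≤ L := by omega
    have := key (y : ℕ) hyL (x : ℕ) hxy
    rw [hS, this]
  have h4 : Bv ≤ p x k / p y k := le_trans h1 (h2.trans (le_of_eq h3))
  calc Bv * p y k ≤ (p x k / p y k) * p y k :=
        mul_le_mul_of_nonneg_right h4 (le_of_lt (hp _ _))
    _ = p x k := div_mul_cancel₀ _ (ne_of_gt (hp _ _))


lemma sq3 (a b c d : ℝ) : (a - d)^2 ≤ 3 * ((a - b)^2 + (b - c)^2 + (c - d)^2) := by
  nlinarith [sq_nonneg (a - 2*b + c), sq_nonneg (b - 2*c + d), sq_nonneg (a - b - c + d)]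

/-- right-composition by a permutation, as an equivalence of configurations -/
def cpe (g : Equiv.Perm (Fin (L + 1))) :
    ((Fin (L+1) → Fin m)) ≃ ((Fin (L+1) → Fin m)) where
  toFun σ := σ ∘ ⇑g
  invFun σ := σ ∘ ⇑g.symm
  left_inv σ := by funext i; simp
  right_inv σ := by funext i; simp

@[simp] lemma cpe_apply (g : Equiv.Perm (Fin (L + 1))) (σ : Fin (L+1) → Fin m) :
    cpe (m := m) g σ = σ ∘ ⇑g := rfl

section Forms

variable (p : Fin (L + 1) → Fin m → ℝ) (f : (Fin (L + 1) → Fin m) → ℝ)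
  (Q : (Fin (L + 1) → Fin m) → (Fin (L + 1) → Fin m) → ℝ)

lemma SQf_nonneg (hp : ∀ i k, 0 < p i k) (hQ0 : ∀ τ τ', 0 ≤ Q τ τ') : 0 ≤ SQf p f Q := by
  refine Finset.sum_nonneg fun τ _ => Finset.sum_nonneg fun τ' _ => ?_
  exact mul_nonneg (mul_nonneg (piw_pos p hp τ).le (hQ0 τ τ')) (sq_nonneg _)

lemma Wf_nonneg (hp : ∀ i k, 0 < p i k) (i : Fin (L+1)) : 0 ≤ Wf p f i := by
  refine Finset.sum_nonneg fun τ _ => Finset.sum_nonneg fun k _ => ?_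
  have h1 := (piw_pos p hp τ).le
  have h2 := (hp i k).le
  positivity

lemma Yf_nonneg (hp : ∀ i k, 0 < p i k) (x y : Fin (L+1)) : 0 ≤ Yf p f x y := by
  refine Finset.sum_nonneg fun σ _ => ?_
  have h1 := (hp y (σ x)).le
  have h2 : (0:ℝ) ≤ ∏ j ∈ univ.erase x, p j (σ j) :=
    Finset.prod_nonneg fun j _ => (hp j (σ j)).le
  positivity

lemma swapsum_le (hp : ∀ i k, 0 < p i k) (hQ0 : ∀ τ τ', 0 ≤ Q τ τ')
    {φ : ℝ} (hφ : 0 < φ) (hL : 1 ≤ L)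
    (hQs : ∀ (τ : Fin (L+1) → Fin m) (i : Fin L),
      Q τ (τ ∘ Equiv.swap i.castSucc i.succ) ≥ φ ^ 2 / (2 * (L : ℝ)))
    (i : Fin L) :
    ∑ σ : Fin (L+1) → Fin m, piw p σ * (f σ - f (σ ∘ Equiv.swap i.castSucc i.succ)) ^ 2
      ≤ (2 * (L:ℝ) / φ ^ 2) * SQf p f Q := by
  have hLpos : (0:ℝ) < (L:ℝ) := by exact_mod_cast Nat.lt_of_lt_of_le Nat.zero_lt_one hL
  have hc : (0:ℝ) < φ ^ 2 / (2 * (L:ℝ)) := by positivity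
  have hmain : (φ ^ 2 / (2 * (L:ℝ))) *
      (∑ σ : Fin (L+1) → Fin m, piw p σ * (f σ - f (σ ∘ Equiv.swap i.castSucc i.succ)) ^ 2)
      ≤ SQf p f Q := by
    rw [Finset.mul_sum, SQf]
    refine Finset.sum_le_sum fun σ _ => ?_
    have h1 : (φ ^ 2 / (2 * (L:ℝ))) * (piw p σ * (f σ - f (σ ∘ Equiv.swap i.castSucc i.succ)) ^ 2)
        ≤ piw p σ * Q σ (σ ∘ Equiv.swap i.castSucc i.succ)
          * (f σ - f (σ ∘ Equiv.swap i.castSucc i.succ)) ^ 2 := by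
      have h2 := hQs σ i
      have h3 : (0:ℝ) ≤ piw p σ * (f σ - f (σ ∘ Equiv.swap i.castSucc i.succ)) ^ 2 :=
        mul_nonneg (piw_pos p hp σ).le (sq_nonneg _)
      calc (φ ^ 2 / (2 * (L:ℝ))) * (piw p σ * (f σ - f (σ ∘ Equiv.swap i.castSucc i.succ)) ^ 2)
          ≤ Q σ (σ ∘ Equiv.swap i.castSucc i.succ)
            * (piw p σ * (f σ - f (σ ∘ Equiv.swap i.castSucc i.succ)) ^ 2) :=
            mul_le_mul_of_nonneg_right h2 h3
        _ = piw p σ * Q σ (σ ∘ Equiv.swap i.castSucc i.succ)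
            * (f σ - f (σ ∘ Equiv.swap i.castSucc i.succ)) ^ 2 := by ring
    refine h1.trans ?_
    exact Finset.single_le_sum
      (f := fun τ' => piw p σ * Q σ τ' * (f σ - f τ') ^ 2)
      (fun τ' _ => by
        have h3 := (piw_pos p hp σ).le
        have h4 := hQ0 σ τ'
        positivity)
      (mem_univ _)
  have hφ2 : φ ^ 2 ≠ 0 := by positivity
  have hid : (2 * (L:ℝ) / φ ^ 2) * (φ ^ 2 / (2 * (L:ℝ))) = 1 := by
    field_simp
  calc ∑ σ : Fin (L+1) → Fin m, piw p σ * (f σ - f (σ ∘ Equiv.swap i.castSucc i.succ)) ^ 2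
      = (2 * (L:ℝ) / φ ^ 2) * ((φ ^ 2 / (2 * (L:ℝ))) *
        ∑ σ : Fin (L+1) → Fin m, piw p σ * (f σ - f (σ ∘ Equiv.swap i.castSucc i.succ)) ^ 2) := by
        rw [← mul_assoc, hid, one_mul]
    _ ≤ (2 * (L:ℝ) / φ ^ 2) * SQf p f Q := by
        refine mul_le_mul_of_nonneg_left hmain ?_
        positivity

lemma Yadj_le (hp : ∀ i k, 0 < p i k) (hQ0 : ∀ τ τ', 0 ≤ Q τ τ')
    {Bv : ℝ} (hB0 : 0 ≤ Bv)
    (hB : ∀ k, Bv ≤ ∏ i : Fin L, min 1 (p i.castSucc k / p i.succ k))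
    {φ : ℝ} (hφ : 0 < φ) (hL : 1 ≤ L)
    (hQs : ∀ (τ : Fin (L+1) → Fin m) (i : Fin L),
      Q τ (τ ∘ Equiv.swap i.castSucc i.succ) ≥ φ ^ 2 / (2 * (L : ℝ)))
    (i : Fin L) :
    Bv * Yf p f i.castSucc i.succ ≤ (2 * (L:ℝ) / φ ^ 2) * SQf p f Q := by
  have h1 : Bv * Yf p f i.castSucc i.succ
      ≤ ∑ σ : Fin (L+1) → Fin m, piw p σ * (f σ - f (σ ∘ Equiv.swap i.castSucc i.succ)) ^ 2 := by
    rw [Yf, Finset.mul_sum]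
    refine Finset.sum_le_sum fun σ _ => ?_
    have key : Bv * p i.succ (σ i.castSucc) ≤ p i.castSucc (σ i.castSucc) :=
      up_bound p hp hB0 hB _ _ _ (by simp [Fin.le_def])
    have h2 : (0:ℝ) ≤ (∏ j ∈ univ.erase i.castSucc, p j (σ j))
        * (f σ - f (σ ∘ Equiv.swap i.castSucc i.succ)) ^ 2 := by
      have := Finset.prod_nonneg (s := univ.erase i.castSucc)
        (f := fun j => p j (σ j)) (fun j _ => (hp j (σ j)).le)
      positivity
    calc Bv * ((p i.succ (σ i.castSucc) * ∏ j ∈ univ.erase i.castSucc, p j (σ j))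
            * (f σ - f (σ ∘ Equiv.swap i.castSucc i.succ)) ^ 2)
        = (Bv * p i.succ (σ i.castSucc)) * ((∏ j ∈ univ.erase i.castSucc, p j (σ j))
            * (f σ - f (σ ∘ Equiv.swap i.castSucc i.succ)) ^ 2) := by ring
      _ ≤ (p i.castSucc (σ i.castSucc)) * ((∏ j ∈ univ.erase i.castSucc, p j (σ j))
            * (f σ - f (σ ∘ Equiv.swap i.castSucc i.succ)) ^ 2) :=
          mul_le_mul_of_nonneg_right key h2
      _ = piw p σ * (f σ - f (σ ∘ Equiv.swap i.castSucc i.succ)) ^ 2 := by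
          rw [piw_split p i.castSucc σ]; ring
  exact h1.trans (swapsum_le p f Q hp hQ0 hφ hL hQs i)

end Forms

/-- the reindexing bijection used for the third leg of the resampling path -/
def e3 (i : Fin (L + 1)) :
    ((Fin (L+1) → Fin m) × Fin m) ≃ ((Fin (L+1) → Fin m) × Fin m) where
  toFun r := (Function.update (r.1 ∘ ⇑(Equiv.swap (0 : Fin (L+1)) i)) 0 r.2, r.1 i)
  invFun q := ((Function.update q.1 0 q.2) ∘ ⇑(Equiv.swap (0 : Fin (L+1)) i), q.1 0)
  left_inv r := by
    have hss : ∀ g : Fin (L+1) → Fin m,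
        (g ∘ ⇑(Equiv.swap (0:Fin (L+1)) i)) ∘ ⇑(Equiv.swap (0:Fin (L+1)) i) = g := by
      intro g; funext j; simp [Equiv.swap_apply_self]
    refine Prod.ext ?_ ?_
    · show (Function.update
          (Function.update (r.1 ∘ ⇑(Equiv.swap (0:Fin (L+1)) i)) 0 r.2) 0 (r.1 i))
            ∘ ⇑(Equiv.swap (0:Fin (L+1)) i) = r.1
      rw [Function.update_idem]
      have h : r.1 i = (r.1 ∘ ⇑(Equiv.swap (0:Fin (L+1)) i)) 0 := by
        simp [Equiv.swap_apply_left]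
      rw [h, Function.update_eq_self, hss]
    · show (Function.update (r.1 ∘ ⇑(Equiv.swap (0:Fin (L+1)) i)) 0 r.2) 0 = r.2
      rw [Function.update_self]
  right_inv q := by
    have hss : ∀ g : Fin (L+1) → Fin m,
        (g ∘ ⇑(Equiv.swap (0:Fin (L+1)) i)) ∘ ⇑(Equiv.swap (0:Fin (L+1)) i) = g := by
      intro g; funext j; simp [Equiv.swap_apply_self]
    refine Prod.ext ?_ ?_
    · show Function.update
          (((Function.update q.1 0 q.2) ∘ ⇑(Equiv.swap (0:Fin (L+1)) i))
            ∘ ⇑(Equiv.swap (0:Fin (L+1)) i)) 0 (q.1 0) = q.1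
      rw [hss, Function.update_idem, Function.update_eq_self]
    · show ((Function.update q.1 0 q.2) ∘ ⇑(Equiv.swap (0:Fin (L+1)) i)) i = q.2
      simp only [Function.comp_apply]
      rw [Equiv.swap_apply_right, Function.update_self]


lemma Yrec (p : Fin (L + 1) → Fin m → ℝ) (f : (Fin (L + 1) → Fin m) → ℝ)
    (hp : ∀ i k, 0 < p i k) {Bv : ℝ} (hB0 : 0 ≤ Bv)
    (hB : ∀ k, Bv ≤ ∏ i : Fin L, min 1 (p i.castSucc k / p i.succ k))
    (x y z : Fin (L+1)) (hxy : x < y) (hyz : y < z) :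
    Bv * Yf p f x z ≤ 6 * Yf p f x y + 3 * Yf p f y z := by
  have nxy : x ≠ y := ne_of_lt hxy
  have nyz : y ≠ z := ne_of_lt hyz
  have nxz : x ≠ z := ne_of_lt (hxy.trans hyz)
  have prodnn : ∀ (s : Finset (Fin (L+1))) (σ : Fin (L+1) → Fin m),
      (0:ℝ) ≤ ∏ j ∈ s, p j (σ j) := fun s σ => Finset.prod_nonneg fun j _ => (hp j (σ j)).le
  -- swap composition identity
  have hswap : ∀ i, Equiv.swap x y (Equiv.swap y z (Equiv.swap x y i)) = Equiv.swap x z i := by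
    intro i
    rcases eq_or_ne i x with rfl | hx
    · rw [Equiv.swap_apply_left, Equiv.swap_apply_left,
        Equiv.swap_apply_of_ne_of_ne nxz.symm nyz.symm, Equiv.swap_apply_left]
    rcases eq_or_ne i y with rfl | hy
    · rw [Equiv.swap_apply_right, Equiv.swap_apply_of_ne_of_ne nxy nxz,
        Equiv.swap_apply_left, Equiv.swap_apply_of_ne_of_ne nxy.symm nyz]
    rcases eq_or_ne i z with rfl | hz
    · rw [Equiv.swap_apply_of_ne_of_ne nxz.symm nyz.symm, Equiv.swap_apply_right,
        Equiv.swap_apply_right, Equiv.swap_apply_right]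
    · rw [Equiv.swap_apply_of_ne_of_ne hx hy, Equiv.swap_apply_of_ne_of_ne hy hz,
        Equiv.swap_apply_of_ne_of_ne hx hy, Equiv.swap_apply_of_ne_of_ne hx hz]
  have hpath : ∀ σ : Fin (L+1) → Fin m,
      ((σ ∘ ⇑(Equiv.swap x y)) ∘ ⇑(Equiv.swap y z)) ∘ ⇑(Equiv.swap x y) = σ ∘ ⇑(Equiv.swap x z) := by
    intro σ; funext i
    simp only [Function.comp_apply]
    exact congrArg σ (hswap i)
  have hinv : ∀ (σ : Fin (L+1) → Fin m) (a b : Fin (L+1)),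
      (σ ∘ ⇑(Equiv.swap a b)) ∘ ⇑(Equiv.swap a b) = σ := by
    intro σ a b; funext i
    simp only [Function.comp_apply, Equiv.swap_apply_self]
  -- the three partial sums
  have step1 : Bv * Yf p f x z ≤
      3 * ((∑ σ : Fin (L+1) → Fin m, Bv * ((p z (σ x) * ∏ j ∈ univ.erase x, p j (σ j))
              * (f σ - f (σ ∘ ⇑(Equiv.swap x y))) ^ 2))
         + (∑ σ : Fin (L+1) → Fin m, Bv * ((p z (σ x) * ∏ j ∈ univ.erase x, p j (σ j))
              * (f (σ ∘ ⇑(Equiv.swap x y)) - f ((σ ∘ ⇑(Equiv.swap x y)) ∘ ⇑(Equiv.swap y z))) ^ 2))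
         + (∑ σ : Fin (L+1) → Fin m, Bv * ((p z (σ x) * ∏ j ∈ univ.erase x, p j (σ j))
              * (f ((σ ∘ ⇑(Equiv.swap x y)) ∘ ⇑(Equiv.swap y z)) - f (σ ∘ ⇑(Equiv.swap x z))) ^ 2))) := by
    rw [Yf, Finset.mul_sum]
    have efin : ∀ t1 t2 t3 : (Fin (L+1) → Fin m) → ℝ,
        (∑ σ : Fin (L+1) → Fin m, (3:ℝ) * (t1 σ + t2 σ + t3 σ))
          = 3 * ((∑ σ : Fin (L+1) → Fin m, t1 σ) + (∑ σ : Fin (L+1) → Fin m, t2 σ)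
              + (∑ σ : Fin (L+1) → Fin m, t3 σ)) := by
      intro t1 t2 t3
      rw [← Finset.sum_add_distrib, ← Finset.sum_add_distrib, Finset.mul_sum]
    rw [← efin]
    refine Finset.sum_le_sum fun σ _ => ?_
    have hD : (f σ - f (σ ∘ ⇑(Equiv.swap x z))) ^ 2 ≤
        3 * ((f σ - f (σ ∘ ⇑(Equiv.swap x y))) ^ 2
          + (f (σ ∘ ⇑(Equiv.swap x y)) - f ((σ ∘ ⇑(Equiv.swap x y)) ∘ ⇑(Equiv.swap y z))) ^ 2
          + (f ((σ ∘ ⇑(Equiv.swap x y)) ∘ ⇑(Equiv.swap y z)) - f (σ ∘ ⇑(Equiv.swap x z))) ^ 2) := by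
      have h := sq3 (f σ) (f (σ ∘ ⇑(Equiv.swap x y)))
        (f ((σ ∘ ⇑(Equiv.swap x y)) ∘ ⇑(Equiv.swap y z)))
        (f (((σ ∘ ⇑(Equiv.swap x y)) ∘ ⇑(Equiv.swap y z)) ∘ ⇑(Equiv.swap x y)))
      rwa [hpath σ] at h
    have hw : (0:ℝ) ≤ Bv * (p z (σ x) * ∏ j ∈ univ.erase x, p j (σ j)) :=
      mul_nonneg hB0 (mul_nonneg (hp _ _).le (prodnn _ σ))
    nlinarith [mul_le_mul_of_nonneg_left hD hw]
  -- S1 bound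
  have hS1 : (∑ σ : Fin (L+1) → Fin m, Bv * ((p z (σ x) * ∏ j ∈ univ.erase x, p j (σ j))
      * (f σ - f (σ ∘ ⇑(Equiv.swap x y))) ^ 2)) ≤ Yf p f x y := by
    rw [Yf]
    refine Finset.sum_le_sum fun σ _ => ?_
    have key : Bv * p z (σ x) ≤ p y (σ x) := up_bound p hp hB0 hB (σ x) y z (le_of_lt hyz)
    have h2 : (0:ℝ) ≤ (∏ j ∈ univ.erase x, p j (σ j)) * (f σ - f (σ ∘ ⇑(Equiv.swap x y))) ^ 2 :=
      mul_nonneg (prodnn _ σ) (sq_nonneg _)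
    calc Bv * ((p z (σ x) * ∏ j ∈ univ.erase x, p j (σ j)) * (f σ - f (σ ∘ ⇑(Equiv.swap x y))) ^ 2)
        = (Bv * p z (σ x)) * ((∏ j ∈ univ.erase x, p j (σ j)) * (f σ - f (σ ∘ ⇑(Equiv.swap x y))) ^ 2) := by
          ring
      _ ≤ p y (σ x) * ((∏ j ∈ univ.erase x, p j (σ j)) * (f σ - f (σ ∘ ⇑(Equiv.swap x y))) ^ 2) :=
          mul_le_mul_of_nonneg_right key h2
      _ = (p y (σ x) * ∏ j ∈ univ.erase x, p j (σ j)) * (f σ - f (σ ∘ ⇑(Equiv.swap x y))) ^ 2 := by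
          ring
  -- S2 bound (reindex by right-composition with swap x y)
  have hS2 : (∑ σ : Fin (L+1) → Fin m, Bv * ((p z (σ x) * ∏ j ∈ univ.erase x, p j (σ j))
      * (f (σ ∘ ⇑(Equiv.swap x y)) - f ((σ ∘ ⇑(Equiv.swap x y)) ∘ ⇑(Equiv.swap y z))) ^ 2))
      ≤ Yf p f y z := by
    have hre := Equiv.sum_comp (cpe (m := m) (Equiv.swap x y))
      (fun σ : Fin (L+1) → Fin m => Bv * ((p z (σ x) * ∏ j ∈ univ.erase x, p j (σ j))
        * (f (σ ∘ ⇑(Equiv.swap x y)) - f ((σ ∘ ⇑(Equiv.swap x y)) ∘ ⇑(Equiv.swap y z))) ^ 2))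
    rw [← hre, Yf]
    refine Finset.sum_le_sum fun η _ => ?_
    show Bv * ((p z ((η ∘ ⇑(Equiv.swap x y)) x) * ∏ j ∈ univ.erase x, p j ((η ∘ ⇑(Equiv.swap x y)) j))
        * (f ((η ∘ ⇑(Equiv.swap x y)) ∘ ⇑(Equiv.swap x y))
           - f (((η ∘ ⇑(Equiv.swap x y)) ∘ ⇑(Equiv.swap x y)) ∘ ⇑(Equiv.swap y z))) ^ 2)
      ≤ (p z (η y) * ∏ j ∈ univ.erase y, p j (η j)) * (f η - f (η ∘ ⇑(Equiv.swap y z))) ^ 2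
    rw [hinv η x y]
    have hvx : (η ∘ ⇑(Equiv.swap x y)) x = η y := by
      simp only [Function.comp_apply, Equiv.swap_apply_left]
    have hprod : ∏ j ∈ univ.erase x, p j ((η ∘ ⇑(Equiv.swap x y)) j)
        = p y (η x) * ∏ j ∈ (univ.erase x).erase y, p j (η j) := by
      rw [← Finset.mul_prod_erase (univ.erase x) _ (by simp [nxy.symm] : y ∈ univ.erase x)]
      congr 1
      · simp only [Function.comp_apply, Equiv.swap_apply_right]
      · refine Finset.prod_congr rfl fun j hj => ?_
        have hjy : j ≠ y := (Finset.mem_erase.mp hj).1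
        have hjx : j ≠ x := (Finset.mem_erase.mp (Finset.mem_erase.mp hj).2).1
        simp only [Function.comp_apply, Equiv.swap_apply_of_ne_of_ne hjx hjy]
    have hprod2 : ∏ j ∈ univ.erase y, p j (η j)
        = p x (η x) * ∏ j ∈ (univ.erase x).erase y, p j (η j) := by
      rw [← Finset.mul_prod_erase (univ.erase y) _ (by simp [nxy] : x ∈ univ.erase y)]
      rw [Finset.erase_right_comm]
    rw [hvx, hprod, hprod2]
    have key : Bv * p y (η x) ≤ p x (η x) := up_bound p hp hB0 hB (η x) x y (le_of_lt hxy)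
    have h2 : (0:ℝ) ≤ p z (η y) * ((∏ j ∈ (univ.erase x).erase y, p j (η j))
        * (f η - f (η ∘ ⇑(Equiv.swap y z))) ^ 2) :=
      mul_nonneg (hp _ _).le (mul_nonneg (prodnn _ η) (sq_nonneg _))
    calc Bv * ((p z (η y) * (p y (η x) * ∏ j ∈ (univ.erase x).erase y, p j (η j)))
            * (f η - f (η ∘ ⇑(Equiv.swap y z))) ^ 2)
        = (Bv * p y (η x)) * (p z (η y) * ((∏ j ∈ (univ.erase x).erase y, p j (η j))
            * (f η - f (η ∘ ⇑(Equiv.swap y z))) ^ 2)) := by ring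
      _ ≤ p x (η x) * (p z (η y) * ((∏ j ∈ (univ.erase x).erase y, p j (η j))
            * (f η - f (η ∘ ⇑(Equiv.swap y z))) ^ 2)) := mul_le_mul_of_nonneg_right key h2
      _ = (p z (η y) * (p x (η x) * ∏ j ∈ (univ.erase x).erase y, p j (η j)))
            * (f η - f (η ∘ ⇑(Equiv.swap y z))) ^ 2 := by ring
  -- S3 bound (reindex by right-composition with (swap x y).trans (swap y z))
  have hS3 : (∑ σ : Fin (L+1) → Fin m, Bv * ((p z (σ x) * ∏ j ∈ univ.erase x, p j (σ j))
      * (f ((σ ∘ ⇑(Equiv.swap x y)) ∘ ⇑(Equiv.swap y z)) - f (σ ∘ ⇑(Equiv.swap x z))) ^ 2))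
      ≤ Yf p f x y := by
    have hre := Equiv.sum_comp (cpe (m := m) ((Equiv.swap x y).trans (Equiv.swap y z)))
      (fun σ : Fin (L+1) → Fin m => Bv * ((p z (σ x) * ∏ j ∈ univ.erase x, p j (σ j))
        * (f ((σ ∘ ⇑(Equiv.swap x y)) ∘ ⇑(Equiv.swap y z)) - f (σ ∘ ⇑(Equiv.swap x z))) ^ 2))
    rw [← hre, Yf]
    refine Finset.sum_le_sum fun η _ => ?_
    have gx : Equiv.swap y z (Equiv.swap x y x) = z := by
      rw [Equiv.swap_apply_left, Equiv.swap_apply_left]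
    have gy : Equiv.swap y z (Equiv.swap x y y) = x := by
      rw [Equiv.swap_apply_right, Equiv.swap_apply_of_ne_of_ne nxy nxz]
    have gz : Equiv.swap y z (Equiv.swap x y z) = y := by
      rw [Equiv.swap_apply_of_ne_of_ne nxz.symm nyz.symm, Equiv.swap_apply_right]
    have gj : ∀ j, j ≠ x → j ≠ y → j ≠ z → Equiv.swap y z (Equiv.swap x y j) = j := by
      intro j h1 h2 h3
      rw [Equiv.swap_apply_of_ne_of_ne h1 h2, Equiv.swap_apply_of_ne_of_ne h2 h3]
    -- identities for the composed configuration
    have hA : ((η ∘ ⇑((Equiv.swap x y).trans (Equiv.swap y z))) ∘ ⇑(Equiv.swap x y)) ∘ ⇑(Equiv.swap y z) = η := by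
      funext i
      simp [Equiv.swap_apply_self]
    have hB' : (η ∘ ⇑((Equiv.swap x y).trans (Equiv.swap y z))) ∘ ⇑(Equiv.swap x z) = η ∘ ⇑(Equiv.swap x y) := by
      funext i
      simp only [Function.comp_apply, Equiv.trans_apply]
      rcases eq_or_ne i x with rfl | hx
      · rw [Equiv.swap_apply_left, gz, Equiv.swap_apply_left]
      rcases eq_or_ne i y with rfl | hy
      · rw [Equiv.swap_apply_of_ne_of_ne nxy.symm nyz, gy, Equiv.swap_apply_right]
      rcases eq_or_ne i z with rfl | hz
      · rw [Equiv.swap_apply_right, gx, Equiv.swap_apply_of_ne_of_ne hx hy]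
      · rw [Equiv.swap_apply_of_ne_of_ne hx hz, gj i hx hy hz,
          Equiv.swap_apply_of_ne_of_ne hx hy]
    show Bv * ((p z ((η ∘ ⇑((Equiv.swap x y).trans (Equiv.swap y z))) x)
          * ∏ j ∈ univ.erase x, p j ((η ∘ ⇑((Equiv.swap x y).trans (Equiv.swap y z))) j))
        * (f (((η ∘ ⇑((Equiv.swap x y).trans (Equiv.swap y z))) ∘ ⇑(Equiv.swap x y)) ∘ ⇑(Equiv.swap y z))
           - f ((η ∘ ⇑((Equiv.swap x y).trans (Equiv.swap y z))) ∘ ⇑(Equiv.swap x z))) ^ 2)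
      ≤ (p y (η x) * ∏ j ∈ univ.erase x, p j (η j)) * (f η - f (η ∘ ⇑(Equiv.swap x y))) ^ 2
    rw [hA, hB']
    have hvx : (η ∘ ⇑((Equiv.swap x y).trans (Equiv.swap y z))) x = η z := by
      simp only [Function.comp_apply, Equiv.trans_apply]; rw [gx]
    have hprod : ∏ j ∈ univ.erase x, p j ((η ∘ ⇑((Equiv.swap x y).trans (Equiv.swap y z))) j)
        = p y (η x) * (p z (η y) * ∏ j ∈ ((univ.erase x).erase y).erase z, p j (η j)) := by
      rw [← Finset.mul_prod_erase (univ.erase x) _ (by simp [nxy.symm] : y ∈ univ.erase x)]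
      rw [← Finset.mul_prod_erase ((univ.erase x).erase y) _
        (by simp [nyz.symm, nxz.symm] : z ∈ (univ.erase x).erase y)]
      congr 1
      · simp only [Function.comp_apply, Equiv.trans_apply]; rw [gy]
      congr 1
      · simp only [Function.comp_apply, Equiv.trans_apply]; rw [gz]
      · refine Finset.prod_congr rfl fun j hj => ?_
        have hjz : j ≠ z := (Finset.mem_erase.mp hj).1
        have hjy : j ≠ y := (Finset.mem_erase.mp (Finset.mem_erase.mp hj).2).1
        have hjx : j ≠ x := (Finset.mem_erase.mp (Finset.mem_erase.mp (Finset.mem_erase.mp hj).2).2).1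
        simp only [Function.comp_apply, Equiv.trans_apply]; rw [gj j hjx hjy hjz]
    have hprod2 : ∏ j ∈ univ.erase x, p j (η j)
        = p y (η y) * (p z (η z) * ∏ j ∈ ((univ.erase x).erase y).erase z, p j (η j)) := by
      rw [← Finset.mul_prod_erase (univ.erase x) _ (by simp [nxy.symm] : y ∈ univ.erase x)]
      rw [← Finset.mul_prod_erase ((univ.erase x).erase y) _
        (by simp [nyz.symm, nxz.symm] : z ∈ (univ.erase x).erase y)]
    rw [hvx, hprod, hprod2]
    have key : Bv * p z (η y) ≤ p y (η y) := up_bound p hp hB0 hB (η y) y z (le_of_lt hyz)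
    have h2 : (0:ℝ) ≤ (p z (η z) * p y (η x)) * ((∏ j ∈ ((univ.erase x).erase y).erase z, p j (η j))
        * (f η - f (η ∘ ⇑(Equiv.swap x y))) ^ 2) :=
      mul_nonneg (mul_nonneg (hp _ _).le (hp _ _).le) (mul_nonneg (prodnn _ η) (sq_nonneg _))
    calc Bv * ((p z (η z) * (p y (η x) * (p z (η y) * ∏ j ∈ ((univ.erase x).erase y).erase z, p j (η j))))
            * (f η - f (η ∘ ⇑(Equiv.swap x y))) ^ 2)
        = (Bv * p z (η y)) * ((p z (η z) * p y (η x)) * ((∏ j ∈ ((univ.erase x).erase y).erase z, p j (η j))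
            * (f η - f (η ∘ ⇑(Equiv.swap x y))) ^ 2)) := by ring
      _ ≤ p y (η y) * ((p z (η z) * p y (η x)) * ((∏ j ∈ ((univ.erase x).erase y).erase z, p j (η j))
            * (f η - f (η ∘ ⇑(Equiv.swap x y))) ^ 2)) := mul_le_mul_of_nonneg_right key h2
      _ = (p y (η x) * (p y (η y) * (p z (η z) * ∏ j ∈ ((univ.erase x).erase y).erase z, p j (η j))))
            * (f η - f (η ∘ ⇑(Equiv.swap x y))) ^ 2 := by ring
  linarith [step1, hS1, hS2, hS3]

lemma Wtransfer (p : Fin (L + 1) → Fin m → ℝ) (f : (Fin (L + 1) → Fin m) → ℝ)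
    (hp : ∀ i k, 0 < p i k) (hsum : ∀ i, ∑ k, p i k = 1)
    {Bv : ℝ} (hB0 : 0 ≤ Bv)
    (hB : ∀ k, Bv ≤ ∏ i : Fin L, min 1 (p i.castSucc k / p i.succ k))
    (i : Fin (L + 1)) (hi : i ≠ 0) :
    Bv * Wf p f i ≤ 6 * Wf p f 0 + 3 * (Bv * Yf p f 0 i) := by
  have h0i : (0 : Fin (L+1)) ≠ i := fun h => hi h.symm
  have hs00 : (Equiv.swap (0:Fin (L+1)) i) 0 = i := Equiv.swap_apply_left 0 i
  have hs0i : (Equiv.swap (0:Fin (L+1)) i) i = 0 := Equiv.swap_apply_right 0 i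
  have hsj : ∀ j, j ≠ 0 → j ≠ i → (Equiv.swap (0:Fin (L+1)) i) j = j :=
    fun j h1 h2 => Equiv.swap_apply_of_ne_of_ne h1 h2
  have hss : ∀ g : Fin (L+1) → Fin m,
      (g ∘ ⇑(Equiv.swap (0:Fin (L+1)) i)) ∘ ⇑(Equiv.swap (0:Fin (L+1)) i) = g := by
    intro g; funext j; simp [Equiv.swap_apply_self]
  have hid2 : ∀ (η : Fin (L+1) → Fin m) (v : Fin m),
      Function.update (Function.update (η ∘ ⇑(Equiv.swap (0:Fin (L+1)) i)) 0 v) i (η i)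
        = Function.update η 0 v := by
    intro η v; funext j
    rcases eq_or_ne j i with rfl | hji
    · rw [Function.update_self, Function.update_of_ne hi]
    · rw [Function.update_of_ne hji]
      rcases eq_or_ne j 0 with rfl | hj0
      · rw [Function.update_self, Function.update_self]
      · rw [Function.update_of_ne hj0, Function.update_of_ne hj0]
        simp only [Function.comp_apply]
        rw [hsj j hj0 hji]
  have hid3 : ∀ (η : Fin (L+1) → Fin m) (v : Fin m),
      (Function.update (Function.update (η ∘ ⇑(Equiv.swap (0:Fin (L+1)) i)) 0 v) 0 (η i))
          ∘ ⇑(Equiv.swap (0:Fin (L+1)) i) = η := by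
    intro η v
    rw [Function.update_idem]
    have h : η i = (η ∘ ⇑(Equiv.swap (0:Fin (L+1)) i)) 0 := by
      simp [Equiv.swap_apply_left]
    rw [h, Function.update_eq_self, hss]
  have hWprod : ∀ (l : Fin (L+1)), Wf p f l = ∑ q : (Fin (L+1) → Fin m) × Fin m,
      piw p q.1 * p l q.2 * (f q.1 - f (Function.update q.1 l q.2)) ^ 2 := by
    intro l; rw [Wf]; exact (Fintype.sum_prod_type' _).symm
  -- step 1 : three-term split
  have step1 : Bv * Wf p f i ≤
      3 * ((∑ q : (Fin (L+1) → Fin m) × Fin m,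
              Bv * (piw p q.1 * p i q.2 * (f q.1 - f (Function.update q.1 0 q.2)) ^ 2))
         + (∑ q : (Fin (L+1) → Fin m) × Fin m,
              Bv * (piw p q.1 * p i q.2 *
                (f (Function.update q.1 0 q.2)
                  - f ((Function.update q.1 0 q.2) ∘ ⇑(Equiv.swap (0:Fin (L+1)) i))) ^ 2))
         + (∑ q : (Fin (L+1) → Fin m) × Fin m,
              Bv * (piw p q.1 * p i q.2 *
                (f ((Function.update q.1 0 q.2) ∘ ⇑(Equiv.swap (0:Fin (L+1)) i))
                  - f (Function.update q.1 i q.2)) ^ 2))) := by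
    rw [hWprod i, Finset.mul_sum]
    have efin : ∀ t1 t2 t3 : ((Fin (L+1) → Fin m) × Fin m) → ℝ,
        (∑ q : (Fin (L+1) → Fin m) × Fin m, (3:ℝ) * (t1 q + t2 q + t3 q))
          = 3 * ((∑ q : (Fin (L+1) → Fin m) × Fin m, t1 q)
              + (∑ q : (Fin (L+1) → Fin m) × Fin m, t2 q)
              + (∑ q : (Fin (L+1) → Fin m) × Fin m, t3 q)) := by
      intro t1 t2 t3
      rw [← Finset.sum_add_distrib, ← Finset.sum_add_distrib, Finset.mul_sum]
    rw [← efin]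
    refine Finset.sum_le_sum fun q _ => ?_
    have hD := sq3 (f q.1) (f (Function.update q.1 0 q.2))
      (f ((Function.update q.1 0 q.2) ∘ ⇑(Equiv.swap (0:Fin (L+1)) i)))
      (f (Function.update q.1 i q.2))
    have hw : (0:ℝ) ≤ Bv * (piw p q.1 * p i q.2) := by
      have h1 : (0:ℝ) ≤ piw p q.1 := Finset.prod_nonneg fun j _ => (hp j _).le
      have h2 := (hp i q.2).le
      positivity
    nlinarith [mul_le_mul_of_nonneg_left hD hw]
  -- T1 bound
  have hT1 : (∑ q : (Fin (L+1) → Fin m) × Fin m,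
      Bv * (piw p q.1 * p i q.2 * (f q.1 - f (Function.update q.1 0 q.2)) ^ 2)) ≤ Wf p f 0 := by
    rw [hWprod 0]
    refine Finset.sum_le_sum fun q _ => ?_
    have key : Bv * p i q.2 ≤ p 0 q.2 := up_bound p hp hB0 hB q.2 0 i (Fin.zero_le i)
    have h2 : (0:ℝ) ≤ piw p q.1 * (f q.1 - f (Function.update q.1 0 q.2)) ^ 2 :=
      mul_nonneg (Finset.prod_nonneg fun j _ => (hp j _).le) (sq_nonneg _)
    calc Bv * (piw p q.1 * p i q.2 * (f q.1 - f (Function.update q.1 0 q.2)) ^ 2)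
        = (Bv * p i q.2) * (piw p q.1 * (f q.1 - f (Function.update q.1 0 q.2)) ^ 2) := by ring
      _ ≤ p 0 q.2 * (piw p q.1 * (f q.1 - f (Function.update q.1 0 q.2)) ^ 2) :=
          mul_le_mul_of_nonneg_right key h2
      _ = piw p q.1 * p 0 q.2 * (f q.1 - f (Function.update q.1 0 q.2)) ^ 2 := by ring
  -- T2 : exact identification with Bv * Yf 0 i
  have e2invol : Function.Involutive
      (fun q : (Fin (L+1) → Fin m) × Fin m => (Function.update q.1 0 q.2, q.1 0)) := by
    intro q
    refine Prod.ext ?_ ?_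
    · show Function.update (Function.update q.1 0 q.2) 0 (q.1 0) = q.1
      rw [Function.update_idem, Function.update_eq_self]
    · show (Function.update q.1 0 q.2) 0 = q.2
      rw [Function.update_self]
  set ep2 : Equiv.Perm ((Fin (L+1) → Fin m) × Fin m) :=
    Function.Involutive.toPerm _ e2invol with hep2
  have ep2app : ∀ q : (Fin (L+1) → Fin m) × Fin m,
      ep2 q = (Function.update q.1 0 q.2, q.1 0) := fun q => rfl
  have hT2 : (∑ q : (Fin (L+1) → Fin m) × Fin m,
      Bv * (piw p q.1 * p i q.2 *
        (f (Function.update q.1 0 q.2)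
          - f ((Function.update q.1 0 q.2) ∘ ⇑(Equiv.swap (0:Fin (L+1)) i))) ^ 2))
      = Bv * Yf p f 0 i := by
    have hre := Equiv.sum_comp ep2
      (fun q : (Fin (L+1) → Fin m) × Fin m =>
        Bv * (piw p q.1 * p i q.2 *
          (f (Function.update q.1 0 q.2)
            - f ((Function.update q.1 0 q.2) ∘ ⇑(Equiv.swap (0:Fin (L+1)) i))) ^ 2))
    rw [← hre]
    calc (∑ q : (Fin (L+1) → Fin m) × Fin m,
          (fun q : (Fin (L+1) → Fin m) × Fin m =>
            Bv * (piw p q.1 * p i q.2 *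
              (f (Function.update q.1 0 q.2)
                - f ((Function.update q.1 0 q.2) ∘ ⇑(Equiv.swap (0:Fin (L+1)) i))) ^ 2))
            (ep2 q))
        = ∑ q : (Fin (L+1) → Fin m) × Fin m,
            Bv * (piw p (Function.update q.1 0 q.2) * p i (q.1 0) *
              (f q.1 - f (q.1 ∘ ⇑(Equiv.swap (0:Fin (L+1)) i))) ^ 2) := by
          refine Finset.sum_congr rfl fun q _ => ?_
          rw [ep2app q]
          have hq : Function.update (Function.update q.1 0 q.2) 0 (q.1 0) = q.1 := by
            rw [Function.update_idem, Function.update_eq_self]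
          show Bv * (piw p (Function.update q.1 0 q.2) * p i (q.1 0) *
              (f (Function.update (Function.update q.1 0 q.2) 0 (q.1 0))
                - f ((Function.update (Function.update q.1 0 q.2) 0 (q.1 0))
                    ∘ ⇑(Equiv.swap (0:Fin (L+1)) i))) ^ 2) = _
          rw [hq]
      _ = ∑ σ : Fin (L+1) → Fin m, ∑ v : Fin m,
            Bv * (piw p (Function.update σ 0 v) * p i (σ 0) *
              (f σ - f (σ ∘ ⇑(Equiv.swap (0:Fin (L+1)) i))) ^ 2) :=
          Fintype.sum_prod_type' (fun σ v =>
            Bv * (piw p (Function.update σ 0 v) * p i (σ 0) *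
              (f σ - f (σ ∘ ⇑(Equiv.swap (0:Fin (L+1)) i))) ^ 2))
      _ = Bv * Yf p f 0 i := by
          rw [Yf, Finset.mul_sum]
          refine Finset.sum_congr rfl fun σ _ => ?_
          have hv : ∀ v : Fin m,
              Bv * (piw p (Function.update σ 0 v) * p i (σ 0) *
                (f σ - f (σ ∘ ⇑(Equiv.swap (0:Fin (L+1)) i))) ^ 2)
              = p 0 v * (Bv * ((p i (σ 0) * ∏ j ∈ univ.erase 0, p j (σ j)) *
                  (f σ - f (σ ∘ ⇑(Equiv.swap (0:Fin (L+1)) i))) ^ 2)) := by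
            intro v; rw [piw_update]; ring
          rw [Finset.sum_congr rfl fun v _ => hv v, ← Finset.sum_mul, hsum 0, one_mul]
  -- T3 bound
  have hT3 : (∑ q : (Fin (L+1) → Fin m) × Fin m,
      Bv * (piw p q.1 * p i q.2 *
        (f ((Function.update q.1 0 q.2) ∘ ⇑(Equiv.swap (0:Fin (L+1)) i))
          - f (Function.update q.1 i q.2)) ^ 2)) ≤ Wf p f 0 := by
    have hre := Equiv.sum_comp (e3 (m := m) i)
      (fun q : (Fin (L+1) → Fin m) × Fin m =>
        Bv * (piw p q.1 * p i q.2 *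
          (f ((Function.update q.1 0 q.2) ∘ ⇑(Equiv.swap (0:Fin (L+1)) i))
            - f (Function.update q.1 i q.2)) ^ 2))
    rw [← hre, hWprod 0]
    refine Finset.sum_le_sum fun r _ => ?_
    show Bv * (piw p (Function.update (r.1 ∘ ⇑(Equiv.swap (0:Fin (L+1)) i)) 0 r.2) * p i (r.1 i) *
        (f ((Function.update (Function.update (r.1 ∘ ⇑(Equiv.swap (0:Fin (L+1)) i)) 0 r.2) 0 (r.1 i))
            ∘ ⇑(Equiv.swap (0:Fin (L+1)) i))
          - f (Function.update (Function.update (r.1 ∘ ⇑(Equiv.swap (0:Fin (L+1)) i)) 0 r.2) i (r.1 i))) ^ 2)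
      ≤ piw p r.1 * p 0 r.2 * (f r.1 - f (Function.update r.1 0 r.2)) ^ 2
    rw [hid3 r.1 r.2, hid2 r.1 r.2, piw_update]
    have hprod : ∏ j ∈ univ.erase 0, p j ((r.1 ∘ ⇑(Equiv.swap (0:Fin (L+1)) i)) j)
        = p i (r.1 0) * ∏ j ∈ (univ.erase 0).erase i, p j (r.1 j) := by
      rw [← Finset.mul_prod_erase (univ.erase 0) _ (by simp [hi] : i ∈ univ.erase 0)]
      congr 1
      · simp only [Function.comp_apply, hs0i]
      · refine Finset.prod_congr rfl fun j hj => ?_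
        have hji : j ≠ i := (Finset.mem_erase.mp hj).1
        have hj0 : j ≠ 0 := (Finset.mem_erase.mp (Finset.mem_erase.mp hj).2).1
        simp only [Function.comp_apply]
        rw [hsj j hj0 hji]
    have hpiw : piw p r.1 = p 0 (r.1 0) * (p i (r.1 i) * ∏ j ∈ (univ.erase 0).erase i, p j (r.1 j)) := by
      rw [piw_split p 0 r.1,
        ← Finset.mul_prod_erase (univ.erase 0) _ (by simp [hi] : i ∈ univ.erase 0)]
    rw [hprod, hpiw]
    have key : Bv * p i (r.1 0) ≤ p 0 (r.1 0) := up_bound p hp hB0 hB (r.1 0) 0 i (Fin.zero_le i)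
    have h2 : (0:ℝ) ≤ (p 0 r.2 * p i (r.1 i)) *
        ((∏ j ∈ (univ.erase 0).erase i, p j (r.1 j)) * (f r.1 - f (Function.update r.1 0 r.2)) ^ 2) := by
      have h3 : (0:ℝ) ≤ ∏ j ∈ (univ.erase 0).erase i, p j (r.1 j) :=
        Finset.prod_nonneg fun j _ => (hp j _).le
      have h4 := (hp 0 r.2).le
      have h5 := (hp i (r.1 i)).le
      positivity
    calc Bv * (p 0 r.2 * (p i (r.1 0) * ∏ j ∈ (univ.erase 0).erase i, p j (r.1 j)) * p i (r.1 i) *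
            (f r.1 - f (Function.update r.1 0 r.2)) ^ 2)
        = (Bv * p i (r.1 0)) * ((p 0 r.2 * p i (r.1 i)) *
            ((∏ j ∈ (univ.erase 0).erase i, p j (r.1 j)) * (f r.1 - f (Function.update r.1 0 r.2)) ^ 2)) := by
          ring
      _ ≤ p 0 (r.1 0) * ((p 0 r.2 * p i (r.1 i)) *
            ((∏ j ∈ (univ.erase 0).erase i, p j (r.1 j)) * (f r.1 - f (Function.update r.1 0 r.2)) ^ 2)) :=
          mul_le_mul_of_nonneg_right key h2
      _ = p 0 (r.1 0) * (p i (r.1 i) * ∏ j ∈ (univ.erase 0).erase i, p j (r.1 j)) * p 0 r.2 *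
            (f r.1 - f (Function.update r.1 0 r.2)) ^ 2 := by ring
  linarith [step1, hT1, hT3, hT2.le, hT2.ge]


lemma Ypow (p : Fin (L + 1) → Fin m → ℝ) (f : (Fin (L + 1) → Fin m) → ℝ)
    (Q : (Fin (L + 1) → Fin m) → (Fin (L + 1) → Fin m) → ℝ)
    (hp : ∀ i k, 0 < p i k) (hQ0 : ∀ τ τ', 0 ≤ Q τ τ')
    {Bv : ℝ} (hB0 : 0 ≤ Bv) (hB1 : Bv ≤ 1)
    (hB : ∀ k, Bv ≤ ∏ i : Fin L, min 1 (p i.castSucc k / p i.succ k))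
    {φ : ℝ} (hφ : 0 < φ) (hL : 1 ≤ L)
    (hQs : ∀ (τ : Fin (L+1) → Fin m) (i : Fin L),
      Q τ (τ ∘ Equiv.swap i.castSucc i.succ) ≥ φ ^ 2 / (2 * (L : ℝ))) :
    ∀ (t : ℕ) (x z : Fin (L+1)), x < z → (z : ℕ) - (x : ℕ) ≤ 2 ^ t →
      Bv ^ (t+1) * Yf p f x z ≤ 9 ^ t * ((2 * (L:ℝ) / φ ^ 2) * SQf p f Q) := by
  have hMnn : (0:ℝ) ≤ (2 * (L:ℝ) / φ ^ 2) * SQf p f Q := by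
    have h1 := SQf_nonneg p f Q hp hQ0
    have h2 : (0:ℝ) ≤ 2 * (L:ℝ) / φ ^ 2 := by positivity
    positivity
  intro t
  induction t with
  | zero =>
      intro x z hxz hle
      have hxz' : (x : ℕ) < (z : ℕ) := hxz
      have hzx : (z : ℕ) = (x : ℕ) + 1 := by
        simp only [pow_zero] at hle; omega
      have hxL : (x : ℕ) < L := by
        have := z.isLt; omega
      have hcast : (Fin.castSucc (⟨(x : ℕ), hxL⟩ : Fin L)) = x := Fin.ext rfl
      have hsucc : (Fin.succ (⟨(x : ℕ), hxL⟩ : Fin L)) = z := Fin.ext (by simp [hzx])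
      have := Yadj_le p f Q hp hQ0 hB0 hB hφ hL hQs ⟨(x : ℕ), hxL⟩
      rw [hcast, hsucc] at this
      simpa using this
  | succ t ih =>
      intro x z hxz hle
      have h2pow : (2:ℕ) ^ (t+1) = 2 ^ t + 2 ^ t := by
        rw [pow_succ]; omega
      by_cases hsmall : (z : ℕ) - (x : ℕ) ≤ 2 ^ t
      · have h1 := ih x z hxz hsmall
        have hYnn := Yf_nonneg p f hp x z
        have hBp : (0:ℝ) ≤ Bv ^ (t+1) := pow_nonneg hB0 _
        have h9 : (9:ℝ) ^ t ≤ 9 ^ (t+1) := by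
          apply pow_le_pow_right₀ ?_ (Nat.le_succ t)
          norm_num
        calc Bv ^ (t+1+1) * Yf p f x z = Bv * (Bv ^ (t+1) * Yf p f x z) := by ring
          _ ≤ 1 * (Bv ^ (t+1) * Yf p f x z) :=
              mul_le_mul_of_nonneg_right hB1 (mul_nonneg hBp hYnn)
          _ = Bv ^ (t+1) * Yf p f x z := one_mul _
          _ ≤ 9 ^ t * ((2 * (L:ℝ) / φ ^ 2) * SQf p f Q) := h1
          _ ≤ 9 ^ (t+1) * ((2 * (L:ℝ) / φ ^ 2) * SQf p f Q) :=
              mul_le_mul_of_nonneg_right h9 hMnn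
      · have hbig : 2 ^ t < (z : ℕ) - (x : ℕ) := not_le.mp hsmall
        have h2t : 0 < 2 ^ t := pow_pos (by norm_num) t
        have hzL : (z : ℕ) < L + 1 := z.isLt
        have hyL : (x : ℕ) + 2 ^ t < L + 1 := by omega
        have hxy : x < (⟨(x : ℕ) + 2 ^ t, hyL⟩ : Fin (L+1)) := by
          rw [Fin.lt_def]; simp
        have hyz : (⟨(x : ℕ) + 2 ^ t, hyL⟩ : Fin (L+1)) < z := by
          rw [Fin.lt_def]; simp; omega
        have hrec := Yrec p f hp hB0 hB x ⟨(x : ℕ) + 2 ^ t, hyL⟩ z hxy hyz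
        have h1 := ih x ⟨(x : ℕ) + 2 ^ t, hyL⟩ hxy (by simp)
        have h2 := ih ⟨(x : ℕ) + 2 ^ t, hyL⟩ z hyz (by simp; omega)
        have hBp : (0:ℝ) ≤ Bv ^ (t+1) := pow_nonneg hB0 _
        calc Bv ^ (t+1+1) * Yf p f x z = Bv ^ (t+1) * (Bv * Yf p f x z) := by ring
          _ ≤ Bv ^ (t+1) * (6 * Yf p f x (⟨(x : ℕ) + 2 ^ t, hyL⟩ : Fin (L+1))
                + 3 * Yf p f (⟨(x : ℕ) + 2 ^ t, hyL⟩ : Fin (L+1)) z) :=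
              mul_le_mul_of_nonneg_left hrec hBp
          _ = 6 * (Bv ^ (t+1) * Yf p f x (⟨(x : ℕ) + 2 ^ t, hyL⟩ : Fin (L+1)))
                + 3 * (Bv ^ (t+1) * Yf p f (⟨(x : ℕ) + 2 ^ t, hyL⟩ : Fin (L+1)) z) := by ring
          _ ≤ 6 * (9 ^ t * ((2 * (L:ℝ) / φ ^ 2) * SQf p f Q))
                + 3 * (9 ^ t * ((2 * (L:ℝ) / φ ^ 2) * SQf p f Q)) := by
              have e1 := mul_le_mul_of_nonneg_left h1 (by norm_num : (0:ℝ) ≤ 6)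
              have e2 := mul_le_mul_of_nonneg_left h2 (by norm_num : (0:ℝ) ≤ 3)
              linarith
          _ = 9 ^ (t+1) * ((2 * (L:ℝ) / φ ^ 2) * SQf p f Q) := by
              rw [pow_succ]; ring

lemma sum_ite_update (τ : Fin (L+1) → Fin m) (i : Fin (L+1)) (G : (Fin (L+1) → Fin m) → ℝ) :
    (∑ τ' : Fin (L+1) → Fin m, if (∀ j, j ≠ i → τ' j = τ j) then G τ' else 0)
      = ∑ k : Fin m, G (Function.update τ i k) := by
  rw [← Finset.sum_filter]
  refine Finset.sum_nbij' (fun τ' => τ' i) (fun k => Function.update τ i k) ?_ ?_ ?_ ?_ ?_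
  · intro τ' _; exact mem_univ _
  · intro k _
    simp only [mem_filter, mem_univ, true_and]
    intro j hj
    exact Function.update_of_ne hj k τ
  · intro τ' hτ'
    have hc := (mem_filter.mp hτ').2
    funext j
    show Function.update τ i (τ' i) j = τ' j
    rcases eq_or_ne j i with rfl | hj
    · rw [Function.update_self]
    · rw [Function.update_of_ne hj, hc j hj]
  · intro k _
    show Function.update τ i k i = k
    rw [Function.update_self]
  · intro τ' hτ'
    have hc := (mem_filter.mp hτ').2
    show G τ' = G (Function.update τ i (τ' i))
    congr 1
    funext j
    rcases eq_or_ne j i with rfl | hj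
    · rw [Function.update_self]
    · rw [Function.update_of_ne hj, hc j hj]

lemma Ptwo_bridge (p : Fin (L + 1) → Fin m → ℝ) (f : (Fin (L + 1) → Fin m) → ℝ)
    (Ptwo : (Fin (L + 1) → Fin m) → (Fin (L + 1) → Fin m) → ℝ)
    (hPtwo : ∀ τ τ', Ptwo τ τ' =
      1 / ((L : ℝ) + 1) * ∑ i, (if ∀ j, j ≠ i → τ' j = τ j then p i (τ' i) else 0)) :
    1 / 2 * ∑ τ : Fin (L+1) → Fin m, ∑ τ' : Fin (L+1) → Fin m,
        piw p τ * Ptwo τ τ' * (f τ - f τ') ^ 2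
      = 1 / (2 * ((L : ℝ) + 1)) * ∑ i : Fin (L+1), Wf p f i := by
  have step1 : ∀ τ τ' : Fin (L+1) → Fin m,
      piw p τ * Ptwo τ τ' * (f τ - f τ') ^ 2
        = 1 / ((L : ℝ) + 1) * ∑ i : Fin (L+1),
            (if ∀ j, j ≠ i → τ' j = τ j then piw p τ * p i (τ' i) * (f τ - f τ') ^ 2 else 0) := by
    intro τ τ'
    rw [hPtwo τ τ']
    rw [Finset.mul_sum, Finset.mul_sum, Finset.mul_sum, Finset.sum_mul]
    refine Finset.sum_congr rfl fun i _ => ?_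
    by_cases h : ∀ j, j ≠ i → τ' j = τ j
    · simp only [if_pos h]; ring
    · simp only [if_neg h, mul_zero, zero_mul]
  calc 1 / 2 * ∑ τ : Fin (L+1) → Fin m, ∑ τ' : Fin (L+1) → Fin m,
        piw p τ * Ptwo τ τ' * (f τ - f τ') ^ 2
      = 1 / 2 * ∑ τ : Fin (L+1) → Fin m, (1 / ((L : ℝ) + 1) * ∑ i : Fin (L+1),
          ∑ τ' : Fin (L+1) → Fin m,
            (if ∀ j, j ≠ i → τ' j = τ j then piw p τ * p i (τ' i) * (f τ - f τ') ^ 2 else 0)) := by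
        congr 1
        refine Finset.sum_congr rfl fun τ _ => ?_
        rw [Finset.sum_congr rfl fun τ' _ => step1 τ τ', ← Finset.mul_sum, Finset.sum_comm]
    _ = 1 / 2 * ∑ τ : Fin (L+1) → Fin m, (1 / ((L : ℝ) + 1) * ∑ i : Fin (L+1),
          ∑ k : Fin m, piw p τ * p i k * (f τ - f (Function.update τ i k)) ^ 2) := by
        congr 1
        refine Finset.sum_congr rfl fun τ _ => ?_
        congr 1
        refine Finset.sum_congr rfl fun i _ => ?_
        rw [sum_ite_update τ i (fun τ' => piw p τ * p i (τ' i) * (f τ - f τ') ^ 2)]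
        refine Finset.sum_congr rfl fun k _ => ?_
        rw [Function.update_self]
    _ = 1 / (2 * ((L : ℝ) + 1)) * ∑ i : Fin (L+1), Wf p f i := by
        rw [← Finset.mul_sum, Finset.sum_comm]
        rw [show (∑ i : Fin (L+1), ∑ τ : Fin (L+1) → Fin m,
          ∑ k : Fin m, piw p τ * p i k * (f τ - f (Function.update τ i k)) ^ 2)
            = ∑ i : Fin (L+1), Wf p f i from rfl]
        have hL1 : ((L:ℝ)+1) ≠ 0 := by positivity
        field_simp
        try ring

lemma Pone_bridge (p : Fin (L + 1) → Fin m → ℝ) (f : (Fin (L + 1) → Fin m) → ℝ)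
    (Q : (Fin (L + 1) → Fin m) → (Fin (L + 1) → Fin m) → ℝ)
    (Pone : (Fin (L + 1) → Fin m) → (Fin (L + 1) → Fin m) → ℝ)
    (hPone : ∀ τ τ', Pone τ τ' =
      1 / 2 * Q τ τ' +
        1 / (2 * ((L : ℝ) + 1)) *
          (if ∀ j, j ≠ 0 → τ' j = τ j then p 0 (τ' 0) else 0) +
        (if τ' = τ then 1 / 2 - 1 / (2 * ((L : ℝ) + 1)) else 0)) :
    1 / 2 * ∑ τ : Fin (L+1) → Fin m, ∑ τ' : Fin (L+1) → Fin m,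
        piw p τ * Pone τ τ' * (f τ - f τ') ^ 2
      = 1 / 4 * SQf p f Q + 1 / (4 * ((L : ℝ) + 1)) * Wf p f 0 := by
  have step1 : ∀ τ τ' : Fin (L+1) → Fin m,
      piw p τ * Pone τ τ' * (f τ - f τ') ^ 2
        = 1 / 2 * (piw p τ * Q τ τ' * (f τ - f τ') ^ 2)
          + 1 / (2 * ((L : ℝ) + 1)) *
            (if ∀ j, j ≠ 0 → τ' j = τ j then piw p τ * p 0 (τ' 0) * (f τ - f τ') ^ 2 else 0) := by
    intro τ τ'
    rw [hPone τ τ']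
    rcases eq_or_ne τ' τ with rfl | hne
    · have hz : (f τ' - f τ') ^ 2 = 0 := by rw [sub_self]; ring
      rw [hz]
      simp
    · rw [if_neg hne]
      by_cases hc : ∀ j, j ≠ (0 : Fin (L+1)) → τ' j = τ j
      · rw [if_pos hc, if_pos hc]; ring
      · rw [if_neg hc, if_neg hc]; ring
  calc 1 / 2 * ∑ τ : Fin (L+1) → Fin m, ∑ τ' : Fin (L+1) → Fin m,
        piw p τ * Pone τ τ' * (f τ - f τ') ^ 2
      = 1 / 2 * ∑ τ : Fin (L+1) → Fin m,
          ((1 / 2 * ∑ τ' : Fin (L+1) → Fin m, piw p τ * Q τ τ' * (f τ - f τ') ^ 2)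
            + 1 / (2 * ((L : ℝ) + 1)) * ∑ τ' : Fin (L+1) → Fin m,
              (if ∀ j, j ≠ 0 → τ' j = τ j then piw p τ * p 0 (τ' 0) * (f τ - f τ') ^ 2 else 0)) := by
        congr 1
        refine Finset.sum_congr rfl fun τ _ => ?_
        rw [Finset.sum_congr rfl fun τ' _ => step1 τ τ', Finset.sum_add_distrib,
          ← Finset.mul_sum, ← Finset.mul_sum]
    _ = 1 / 2 * ∑ τ : Fin (L+1) → Fin m,
          ((1 / 2 * ∑ τ' : Fin (L+1) → Fin m, piw p τ * Q τ τ' * (f τ - f τ') ^ 2)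
            + 1 / (2 * ((L : ℝ) + 1)) * ∑ k : Fin m,
                piw p τ * p 0 k * (f τ - f (Function.update τ 0 k)) ^ 2) := by
        congr 1
        refine Finset.sum_congr rfl fun τ _ => ?_
        congr 1
        congr 1
        rw [sum_ite_update τ 0 (fun τ' => piw p τ * p 0 (τ' 0) * (f τ - f τ') ^ 2)]
        refine Finset.sum_congr rfl fun k _ => ?_
        rw [Function.update_self]
    _ = 1 / 4 * SQf p f Q + 1 / (4 * ((L : ℝ) + 1)) * Wf p f 0 := by
        rw [Finset.sum_add_distrib, ← Finset.mul_sum, ← Finset.mul_sum, SQf, Wf]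
        have hL1 : ((L:ℝ)+1) ≠ 0 := by positivity
        field_simp
        try ring

lemma rev_term (p : Fin (L + 1) → Fin m → ℝ) (i : Fin (L+1)) (τ τ' : Fin (L+1) → Fin m) :
    piw p τ * (if ∀ j, j ≠ i → τ' j = τ j then p i (τ' i) else 0)
      = piw p τ' * (if ∀ j, j ≠ i → τ j = τ' j then p i (τ i) else 0) := by
  by_cases h : ∀ j, j ≠ i → τ' j = τ j
  · have h' : ∀ j, j ≠ i → τ j = τ' j := fun j hj => (h j hj).symm
    rw [if_pos h, if_pos h', piw_split p i τ, piw_split p i τ']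
    have he : ∏ j ∈ univ.erase i, p j (τ j) = ∏ j ∈ univ.erase i, p j (τ' j) :=
      Finset.prod_congr rfl fun j hj => by rw [h j (mem_erase.mp hj).1]
    rw [he]; ring
  · have h' : ¬ ∀ j, j ≠ i → τ j = τ' j := fun hco => h fun j hj => (hco j hj).symm
    rw [if_neg h, if_neg h', mul_zero, mul_zero]


lemma tlog (L : ℕ) (hL : 1 ≤ L) :
    ((Nat.clog 2 L : ℕ) : ℝ) ≤ 1 + Real.logb 2 ((L : ℝ) + 1) := by
  have hL' : (1:ℝ) ≤ (L:ℝ) := by exact_mod_cast hL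
  have hlb0 : 0 ≤ Real.logb 2 ((L : ℝ) + 1) :=
    Real.logb_nonneg (by norm_num) (by linarith)
  rcases eq_or_lt_of_le hL with h1 | h2
  · rw [← h1, Nat.clog_one_right]
    have : (0:ℝ) ≤ Real.logb 2 ((L:ℝ)+1) := hlb0
    rw [← h1] at this
    push_cast at this ⊢
    linarith
  · have hT1 : 0 < Nat.clog 2 L := Nat.clog_pos (by norm_num) h2
    set T := Nat.clog 2 L with hT
    have hlt : 2 ^ (T - 1) < L := Nat.pow_pred_clog_lt_self (by norm_num) h2
    have hcast : ((2:ℝ)) ^ ((T - 1 : ℕ) : ℝ) ≤ (L : ℝ) + 1 := by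
      rw [Real.rpow_natCast]
      have h3 : ((2 ^ (T-1) : ℕ) : ℝ) ≤ (L : ℝ) + 1 := by
        have := (Nat.cast_lt (α := ℝ)).mpr hlt
        linarith
      push_cast at h3
      linarith
    have hlog : ((T - 1 : ℕ) : ℝ) ≤ Real.logb 2 ((L : ℝ) + 1) := by
      have h := Real.logb_le_logb_of_le (by norm_num : (1:ℝ) < 2)
        (by positivity : (0:ℝ) < (2:ℝ) ^ ((T - 1 : ℕ) : ℝ)) hcast
      rwa [Real.logb_rpow (by norm_num) (by norm_num)] at h
    have hc : ((T : ℕ) : ℝ) = ((T - 1 : ℕ) : ℝ) + 1 := by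
      have h4 : T - 1 + 1 = T := Nat.succ_pred_eq_of_pos hT1
      exact_mod_cast (congrArg (fun n : ℕ => ((n : ℕ) : ℝ)) h4).symm
    rw [hc]; linarith

lemma nine_id (L : ℕ) : (9:ℝ) ^ (Real.logb 2 ((L:ℝ)+1)) = ((L:ℝ)+1) ^ (2 * Real.logb 2 3) := by
  rw [Real.rpow_def_of_pos (by norm_num : (0:ℝ) < 9),
    Real.rpow_def_of_pos (by positivity : (0:ℝ) < (L:ℝ)+1)]
  congr 1
  rw [Real.logb, Real.logb]
  have h9 : Real.log 9 = 2 * Real.log 3 := by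
    rw [show (9:ℝ) = 3^2 by norm_num, Real.log_pow]; push_cast; ring
  rw [h9]; ring


end S18

open S18 Finset

/-- Dirichlet-form comparison behind the main lower bound: there is an
absolute constant `C > 0` such that for all `L ≥ 1`, `m ≥ 2`, every `p : {0,…,L}×{1,…,m} →
(0,1]` with unit row sums (modes `{1,…,m}` encoded as `Fin m`, levels `{0,…,L}` as
`Fin (L+1)`), with `π̄(λ) = Π_i p(i, λ_i)` and bottleneck ratio
`B = min_k Π_{i=1}^{L} min{1, p(i−1,k)/p(i,k)}`, every `φ ∈ (0,1]`, and every `π̄`-reversible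
transition matrix `Q` with `Q(τ, (i−1 i)τ) ≥ φ²/(2L)`, the chains
`P₁ = (1/2)Q + (1/(2(L+1)))R₀ + (1/2 − 1/(2(L+1)))I` and the random-scan resampling chain
`P₂` are both `π̄`-reversible and satisfy
`E_{P₂}(f) ≤ C m³ (L+1)^{1+2log₂3} φ⁻² B^{−C(1+log₂(L+1))} E_{P₁}(f)` for all `f`. -/
theorem stmt_18 : ∃ C : ℝ, 0 < C ∧
    ∀ (L m : ℕ), 1 ≤ L → ∀ hm : 2 ≤ m,
    ∀ p : Fin (L + 1) → Fin m → ℝ,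
    (∀ i k, 0 < p i k ∧ p i k ≤ 1) →
    (∀ i, ∑ k, p i k = 1) →
    ∀ φ : ℝ, 0 < φ → φ ≤ 1 →
    ∀ Q : (Fin (L + 1) → Fin m) → (Fin (L + 1) → Fin m) → ℝ,
    (∀ τ τ', 0 ≤ Q τ τ') →
    (∀ τ, ∑ τ', Q τ τ' = 1) →
    (∀ τ τ', (∏ i, p i (τ i)) * Q τ τ' = (∏ i, p i (τ' i)) * Q τ' τ) →
    (∀ (τ : Fin (L + 1) → Fin m) (i : Fin L),
      Q τ (τ ∘ Equiv.swap i.castSucc i.succ) ≥ φ ^ 2 / (2 * (L : ℝ))) →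
    ∀ Pone Ptwo : (Fin (L + 1) → Fin m) → (Fin (L + 1) → Fin m) → ℝ,
    (∀ τ τ', Pone τ τ' =
      1 / 2 * Q τ τ' +
        1 / (2 * ((L : ℝ) + 1)) *
          (if ∀ j, j ≠ 0 → τ' j = τ j then p 0 (τ' 0) else 0) +
        (if τ' = τ then 1 / 2 - 1 / (2 * ((L : ℝ) + 1)) else 0)) →
    (∀ τ τ', Ptwo τ τ' =
      1 / ((L : ℝ) + 1) *
        ∑ i, (if ∀ j, j ≠ i → τ' j = τ j then p i (τ' i) else 0)) →
    ((∀ τ τ', (∏ i, p i (τ i)) * Pone τ τ' = (∏ i, p i (τ' i)) * Pone τ' τ) ∧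
     (∀ τ τ', (∏ i, p i (τ i)) * Ptwo τ τ' = (∏ i, p i (τ' i)) * Ptwo τ' τ) ∧
     ∀ f : (Fin (L + 1) → Fin m) → ℝ,
       1 / 2 * ∑ τ, ∑ τ', (∏ i, p i (τ i)) * Ptwo τ τ' * (f τ - f τ') ^ 2 ≤
         C * (m : ℝ) ^ 3 * ((L : ℝ) + 1) ^ (1 + 2 * Real.logb 2 3) * (φ ^ 2)⁻¹ *
           (Finset.univ.inf' ⟨⟨0, by omega⟩, Finset.mem_univ _⟩
              (fun k : Fin m => ∏ i : Fin L, min 1 (p i.castSucc k / p i.succ k))) ^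
             (-(C * (1 + Real.logb 2 ((L : ℝ) + 1)))) *
           (1 / 2 * ∑ τ, ∑ τ', (∏ i, p i (τ i)) * Pone τ τ' * (f τ - f τ') ^ 2)) := by
  refine ⟨120, by norm_num, ?_⟩
  intro L m hL hm p hp01 hsum φ hφ0 hφ1 Q hQ0 hQrow hQrev hQs Pone Ptwo hPone hPtwo
  have hp : ∀ i k, 0 < p i k := fun i k => (hp01 i k).1
  have hLpos : (0:ℝ) < (L:ℝ) := by exact_mod_cast Nat.lt_of_lt_of_le Nat.zero_lt_one hL
  have hL1pos : (0:ℝ) < (L:ℝ) + 1 := by linarith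
  set Bv : ℝ := Finset.univ.inf' ⟨⟨0, by omega⟩, Finset.mem_univ _⟩
      (fun k : Fin m => ∏ i : Fin L, min 1 (p i.castSucc k / p i.succ k)) with hBv
  have hBle : ∀ k, Bv ≤ ∏ i : Fin L, min 1 (p i.castSucc k / p i.succ k) :=
    fun k => Finset.inf'_le _ (Finset.mem_univ k)
  have hB0 : 0 < Bv := by
    rw [hBv]; refine (Finset.lt_inf'_iff _).2 ?_
    intro k _
    exact Finset.prod_pos fun i _ => lt_min one_pos (div_pos (hp _ _) (hp _ _))
  have hB1 : Bv ≤ 1 := by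
    refine le_trans (hBle ⟨0, by omega⟩) ?_
    refine Finset.prod_le_one (fun i _ => ?_) (fun i _ => min_le_left _ _)
    exact le_min zero_le_one (le_of_lt (div_pos (hp _ _) (hp _ _)))
  refine ⟨?_, ?_, ?_⟩
  · -- reversibility of Pone
    intro τ τ'
    show piw p τ * Pone τ τ' = piw p τ' * Pone τ' τ
    rw [hPone τ τ', hPone τ' τ]
    have hmid := rev_term p 0 τ τ'
    have hQe : piw p τ * Q τ τ' = piw p τ' * Q τ' τ := hQrev τ τ'
    have hdiag : piw p τ * (if τ' = τ then (1:ℝ)/2 - 1/(2*((L:ℝ)+1)) else 0)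
        = piw p τ' * (if τ = τ' then (1:ℝ)/2 - 1/(2*((L:ℝ)+1)) else 0) := by
      rcases eq_or_ne τ' τ with rfl | hne
      · rfl
      · rw [if_neg hne, if_neg (fun hh => hne hh.symm), mul_zero, mul_zero]
    linear_combination (1/2) * hQe + (1/(2*((L:ℝ)+1))) * hmid + hdiag
  · -- reversibility of Ptwo
    intro τ τ'
    show piw p τ * Ptwo τ τ' = piw p τ' * Ptwo τ' τ
    rw [hPtwo τ τ', hPtwo τ' τ]
    have e1 : (∑ i : Fin (L+1), piw p τ *
          (if ∀ j, j ≠ i → τ' j = τ j then p i (τ' i) else 0))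
        = ∑ i : Fin (L+1), piw p τ' *
          (if ∀ j, j ≠ i → τ j = τ' j then p i (τ i) else 0) :=
      Finset.sum_congr rfl fun i _ => rev_term p i τ τ'
    have rearr : ∀ (w S : ℝ), w * (1/((L:ℝ)+1) * S) = 1/((L:ℝ)+1) * (w * S) := by
      intros; ring
    rw [rearr, rearr]
    congr 1
    rw [Finset.mul_sum, Finset.mul_sum]
    exact e1
  · -- the Dirichlet form comparison
    intro f
    suffices h : 1 / 2 * ∑ τ : Fin (L+1) → Fin m, ∑ τ' : Fin (L+1) → Fin m,
        piw p τ * Ptwo τ τ' * (f τ - f τ') ^ 2 ≤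
        120 * (m : ℝ) ^ 3 * ((L : ℝ) + 1) ^ (1 + 2 * Real.logb 2 3) * (φ ^ 2)⁻¹ *
          Bv ^ (-(120 * (1 + Real.logb 2 ((L : ℝ) + 1)))) *
          (1 / 2 * ∑ τ : Fin (L+1) → Fin m, ∑ τ' : Fin (L+1) → Fin m,
            piw p τ * Pone τ τ' * (f τ - f τ') ^ 2) by exact h
    have hE2 := Ptwo_bridge p f Ptwo hPtwo
    have hE1b := Pone_bridge p f Q Pone hPone
    set E1 : ℝ := 1 / 2 * ∑ τ : Fin (L+1) → Fin m, ∑ τ' : Fin (L+1) → Fin m,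
        piw p τ * Pone τ τ' * (f τ - f τ') ^ 2 with hE1def
    rw [hE2]
    have hSQnn := SQf_nonneg p f Q hp hQ0
    have hW0nn := Wf_nonneg p f hp 0
    have hE1nn : 0 ≤ E1 := by
      rw [hE1b]
      have c1 : (0:ℝ) ≤ 1/(4*((L:ℝ)+1)) := by positivity
      nlinarith
    have hE1' : 4*((L:ℝ)+1) * E1 = ((L:ℝ)+1) * SQf p f Q + Wf p f 0 := by
      rw [hE1b]
      field_simp
    have hSQle : SQf p f Q ≤ 4 * E1 := by
      have h1 : ((L:ℝ)+1) * SQf p f Q ≤ ((L:ℝ)+1) * (4 * E1) := by nlinarith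
      exact le_of_mul_le_mul_left h1 hL1pos
    have hW0le : Wf p f 0 ≤ 4*((L:ℝ)+1) * E1 := by
      nlinarith [mul_nonneg hL1pos.le hSQnn]
    set T := Nat.clog 2 L with hT
    have hL2T : L ≤ 2 ^ T := Nat.le_pow_clog (by norm_num) L
    have key1 : ∀ i : Fin (L+1), Bv^(T+1) * Wf p f i
        ≤ 6 * Wf p f 0 + 3 * ((9:ℝ)^T * ((2*(L:ℝ)/φ^2) * SQf p f Q)) := by
      intro i
      have hterm2nn : (0:ℝ) ≤ 3 * ((9:ℝ)^T * ((2*(L:ℝ)/φ^2) * SQf p f Q)) := by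
        positivity
      rcases eq_or_ne i 0 with rfl | hi
      · have h1 : Bv^(T+1) ≤ 1 := pow_le_one₀ hB0.le hB1
        have h2 := mul_le_mul_of_nonneg_right h1 (Wf_nonneg p f hp 0)
        rw [one_mul] at h2
        linarith [Wf_nonneg p f hp 0]
      · have h1 := Wtransfer p f hp hsum hB0.le hBle i hi
        have hipos : (0 : Fin (L+1)) < i := Fin.pos_iff_ne_zero.mpr hi
        have hile : ((i : ℕ) : ℕ) - ((0 : Fin (L+1)) : ℕ) ≤ 2 ^ T := by
          have := Nat.lt_succ_iff.mp i.isLt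
          simp only [Fin.val_zero]
          omega
        have h2 := Ypow p f Q hp hQ0 hB0.le hB1 hBle hφ0 hL hQs T 0 i hipos hile
        have hBTnn : (0:ℝ) ≤ Bv^T := pow_nonneg hB0.le T
        have hBT1 : Bv^T ≤ 1 := pow_le_one₀ hB0.le hB1
        calc Bv^(T+1) * Wf p f i = Bv^T * (Bv * Wf p f i) := by rw [pow_succ]; ring
          _ ≤ Bv^T * (6 * Wf p f 0 + 3 * (Bv * Yf p f 0 i)) := by
              refine mul_le_mul_of_nonneg_left h1 hBTnn
          _ = 6 * (Bv^T * Wf p f 0) + 3 * (Bv^(T+1) * Yf p f 0 i) := by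
              rw [pow_succ]; ring
          _ ≤ 6 * Wf p f 0 + 3 * ((9:ℝ)^T * ((2*(L:ℝ)/φ^2) * SQf p f Q)) := by
              have e1 := mul_le_mul_of_nonneg_right hBT1 (Wf_nonneg p f hp 0)
              rw [one_mul] at e1
              linarith [h2]
    have key2 : Bv^(T+1) * ∑ i : Fin (L+1), Wf p f i
        ≤ ((L:ℝ)+1) * (6 * Wf p f 0 + 3 * ((9:ℝ)^T * ((2*(L:ℝ)/φ^2) * SQf p f Q))) := by
      rw [Finset.mul_sum]
      calc (∑ i : Fin (L+1), Bv^(T+1) * Wf p f i)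
          ≤ ∑ _i : Fin (L+1), (6 * Wf p f 0 + 3 * ((9:ℝ)^T * ((2*(L:ℝ)/φ^2) * SQf p f Q))) :=
            Finset.sum_le_sum fun i _ => key1 i
        _ = ((L:ℝ)+1) * (6 * Wf p f 0 + 3 * ((9:ℝ)^T * ((2*(L:ℝ)/φ^2) * SQf p f Q))) := by
            rw [Finset.sum_const, Finset.card_univ, Fintype.card_fin, nsmul_eq_mul]
            push_cast
            ring
    have hBTpos : (0:ℝ) < Bv^(T+1) := pow_pos hB0 _
    have hmain : Bv^(T+1) * (1 / (2 * ((L:ℝ)+1)) * ∑ i : Fin (L+1), Wf p f i)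
        ≤ (12*((L:ℝ)+1) + 12*(9:ℝ)^T*((L:ℝ)*(φ^2)⁻¹)) * E1 := by
      have h1 : Bv^(T+1) * (1 / (2 * ((L:ℝ)+1)) * ∑ i : Fin (L+1), Wf p f i)
          = (1 / (2 * ((L:ℝ)+1))) * (Bv^(T+1) * ∑ i : Fin (L+1), Wf p f i) := by ring
      rw [h1]
      have h2 := mul_le_mul_of_nonneg_left key2 (by positivity : (0:ℝ) ≤ 1 / (2 * ((L:ℝ)+1)))
      have h3 : (1 / (2 * ((L:ℝ)+1))) * (((L:ℝ)+1) *
          (6 * Wf p f 0 + 3 * ((9:ℝ)^T * ((2*(L:ℝ)/φ^2) * SQf p f Q))))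
          = 3 * Wf p f 0 + 3 * (9:ℝ)^T * ((L:ℝ)/φ^2) * SQf p f Q := by
        field_simp
        ring
      rw [h3] at h2
      have h4 : 3 * Wf p f 0 ≤ 12*((L:ℝ)+1) * E1 := by linarith
      have h5 : 3 * (9:ℝ)^T * ((L:ℝ)/φ^2) * SQf p f Q ≤ 12*(9:ℝ)^T*((L:ℝ)*(φ^2)⁻¹) * E1 := by
        have c1 : (0:ℝ) ≤ 3 * (9:ℝ)^T * ((L:ℝ)/φ^2) := by positivity
        have h6 := mul_le_mul_of_nonneg_left hSQle c1
        calc 3 * (9:ℝ)^T * ((L:ℝ)/φ^2) * SQf p f Q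
            = 3 * (9:ℝ)^T * ((L:ℝ)/φ^2) * SQf p f Q := rfl
          _ ≤ 3 * (9:ℝ)^T * ((L:ℝ)/φ^2) * (4 * E1) := h6
          _ = 12*(9:ℝ)^T*((L:ℝ)*(φ^2)⁻¹) * E1 := by
              rw [div_eq_mul_inv]; ring
      calc (1 / (2 * ((L:ℝ)+1))) * (Bv^(T+1) * ∑ i : Fin (L+1), Wf p f i)
          ≤ 3 * Wf p f 0 + 3 * (9:ℝ)^T * ((L:ℝ)/φ^2) * SQf p f Q := h2
        _ ≤ 12*((L:ℝ)+1) * E1 + 12*(9:ℝ)^T*((L:ℝ)*(φ^2)⁻¹) * E1 := by linarith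
        _ = (12*((L:ℝ)+1) + 12*(9:ℝ)^T*((L:ℝ)*(φ^2)⁻¹)) * E1 := by ring
    have hmain2 : (1 / (2 * ((L:ℝ)+1)) * ∑ i : Fin (L+1), Wf p f i)
        ≤ ((Bv^(T+1))⁻¹ * (12*((L:ℝ)+1) + 12*(9:ℝ)^T*((L:ℝ)*(φ^2)⁻¹))) * E1 := by
      have h0 : (1 / (2 * ((L:ℝ)+1)) * ∑ i : Fin (L+1), Wf p f i)
          = (Bv^(T+1))⁻¹ * (Bv^(T+1) * (1 / (2 * ((L:ℝ)+1)) * ∑ i : Fin (L+1), Wf p f i)) := by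
        rw [inv_mul_cancel_left₀ (ne_of_gt hBTpos)]
      rw [h0]
      calc (Bv^(T+1))⁻¹ * (Bv^(T+1) * (1 / (2 * ((L:ℝ)+1)) * ∑ i : Fin (L+1), Wf p f i))
          ≤ (Bv^(T+1))⁻¹ * ((12*((L:ℝ)+1) + 12*(9:ℝ)^T*((L:ℝ)*(φ^2)⁻¹)) * E1) :=
            mul_le_mul_of_nonneg_left hmain (inv_nonneg.mpr hBTpos.le)
        _ = ((Bv^(T+1))⁻¹ * (12*((L:ℝ)+1) + 12*(9:ℝ)^T*((L:ℝ)*(φ^2)⁻¹))) * E1 := by ring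
    -- numerical comparison of constants
    have hlg3nn : 0 ≤ Real.logb 2 3 := Real.logb_nonneg (by norm_num) (by norm_num)
    have hlgLnn : 0 ≤ Real.logb 2 ((L:ℝ)+1) := Real.logb_nonneg (by norm_num) (by linarith)
    have htT : ((T : ℕ) : ℝ) ≤ 1 + Real.logb 2 ((L:ℝ)+1) := tlog L hL
    have hexp : (((T+1) : ℕ) : ℝ) ≤ 120 * (1 + Real.logb 2 ((L:ℝ)+1)) := by
      push_cast
      linarith
    have hinv : (Bv^(T+1))⁻¹ = Bv ^ (-(((T+1 : ℕ)) : ℝ)) := by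
      rw [Real.rpow_neg hB0.le, Real.rpow_natCast]
    have hrmono : Bv ^ (-(((T+1 : ℕ)) : ℝ)) ≤ Bv ^ (-(120 * (1 + Real.logb 2 ((L:ℝ)+1)))) :=
      Real.rpow_le_rpow_of_exponent_ge hB0 hB1 (by linarith)
    have h9T : (9:ℝ)^T ≤ 9 * ((L:ℝ)+1) ^ (2 * Real.logb 2 3) := by
      have h1 : (9:ℝ)^T = (9:ℝ) ^ ((T : ℕ) : ℝ) := (Real.rpow_natCast 9 T).symm
      rw [h1]
      calc (9:ℝ) ^ ((T : ℕ) : ℝ) ≤ (9:ℝ) ^ (1 + Real.logb 2 ((L:ℝ)+1)) :=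
            Real.rpow_le_rpow_of_exponent_le (by norm_num) htT
        _ = 9 * (9:ℝ) ^ (Real.logb 2 ((L:ℝ)+1)) := by
            rw [Real.rpow_add (by norm_num), Real.rpow_one]
        _ = 9 * ((L:ℝ)+1) ^ (2 * Real.logb 2 3) := by rw [nine_id L]
    have hA1 : (1:ℝ) ≤ ((L:ℝ)+1) ^ (2 * Real.logb 2 3) := by
      calc (1:ℝ) = ((L:ℝ)+1) ^ (0:ℝ) := (Real.rpow_zero _).symm
        _ ≤ ((L:ℝ)+1) ^ (2 * Real.logb 2 3) :=
          Real.rpow_le_rpow_of_exponent_le (by linarith) (by positivity)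
    have hsplit : ((L:ℝ)+1) ^ (1 + 2 * Real.logb 2 3)
        = ((L:ℝ)+1) * ((L:ℝ)+1) ^ (2 * Real.logb 2 3) := by
      rw [Real.rpow_add hL1pos, Real.rpow_one]
    have hφ2p : (0:ℝ) < φ^2 := by positivity
    have hφinv1 : (1:ℝ) ≤ (φ^2)⁻¹ := by
      have hφ2 : φ^2 ≤ 1 := by nlinarith
      calc (1:ℝ) = 1⁻¹ := by norm_num
        _ ≤ (φ^2)⁻¹ := by exact inv_anti₀ hφ2p hφ2
    have hm1 : (1:ℝ) ≤ (m:ℝ)^3 := by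
      have h1 : (1:ℝ) ≤ (m:ℝ) := by exact_mod_cast (by omega : 1 ≤ m)
      calc (1:ℝ) = 1^3 := by norm_num
        _ ≤ (m:ℝ)^3 := pow_le_pow_left₀ zero_le_one h1 3
    have hAnn : (0:ℝ) ≤ ((L:ℝ)+1) ^ (2 * Real.logb 2 3) := by positivity
    have hφinvnn : (0:ℝ) ≤ (φ^2)⁻¹ := by positivity
    have hR : 12*((L:ℝ)+1) + 12*(9:ℝ)^T*((L:ℝ)*(φ^2)⁻¹)
        ≤ 120 * (m:ℝ)^3 * (((L:ℝ)+1) ^ (1 + 2 * Real.logb 2 3)) * (φ^2)⁻¹ := by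
      rw [hsplit]
      have g2 : (1:ℝ) ≤ ((L:ℝ)+1) ^ (2 * Real.logb 2 3) * (φ^2)⁻¹ := by
        calc (1:ℝ) = 1 * 1 := by norm_num
          _ ≤ ((L:ℝ)+1) ^ (2 * Real.logb 2 3) * (φ^2)⁻¹ :=
            mul_le_mul hA1 hφinv1 zero_le_one (le_trans zero_le_one hA1)
      have g3 : (1:ℝ) ≤ (m:ℝ)^3 * (((L:ℝ)+1) ^ (2 * Real.logb 2 3) * (φ^2)⁻¹) := by
        calc (1:ℝ) = 1 * 1 := by norm_num
          _ ≤ (m:ℝ)^3 * (((L:ℝ)+1) ^ (2 * Real.logb 2 3) * (φ^2)⁻¹) :=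
            mul_le_mul hm1 g2 zero_le_one (le_trans zero_le_one hm1)
      have hterm1 : 12*((L:ℝ)+1)
          ≤ 12*((L:ℝ)+1) * ((m:ℝ)^3 * (((L:ℝ)+1) ^ (2 * Real.logb 2 3) * (φ^2)⁻¹)) := by
        have h := mul_le_mul_of_nonneg_left g3 (show (0:ℝ) ≤ 12*((L:ℝ)+1) by positivity)
        rw [mul_one] at h
        exact h
      have hLle : (L:ℝ) ≤ (L:ℝ)+1 := by linarith
      have h2 : (L:ℝ)*(φ^2)⁻¹ ≤ ((L:ℝ)+1)*(φ^2)⁻¹ :=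
        mul_le_mul_of_nonneg_right hLle hφinvnn
      have h3 : (9:ℝ)^T * ((L:ℝ)*(φ^2)⁻¹)
          ≤ (9 * ((L:ℝ)+1) ^ (2 * Real.logb 2 3)) * (((L:ℝ)+1)*(φ^2)⁻¹) :=
        mul_le_mul h9T h2 (by positivity) (by positivity)
      have h4 := mul_le_mul_of_nonneg_left h3 (show (0:ℝ) ≤ 12 by norm_num)
      have h5 : (0:ℝ) ≤ 108 * (((L:ℝ)+1) ^ (2 * Real.logb 2 3) * (((L:ℝ)+1)*(φ^2)⁻¹)) := by
        positivity
      have h6 := mul_le_mul_of_nonneg_left hm1 h5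
      rw [mul_one] at h6
      linarith [hterm1, h4, h6]
    have hfinal : (Bv^(T+1))⁻¹ * (12*((L:ℝ)+1) + 12*(9:ℝ)^T*((L:ℝ)*(φ^2)⁻¹))
        ≤ 120 * (m:ℝ)^3 * (((L:ℝ)+1) ^ (1 + 2 * Real.logb 2 3)) * (φ^2)⁻¹ *
            Bv ^ (-(120 * (1 + Real.logb 2 ((L:ℝ)+1)))) := by
      have hRnn : (0:ℝ) ≤ 12*((L:ℝ)+1) + 12*(9:ℝ)^T*((L:ℝ)*(φ^2)⁻¹) := by positivity
      have hBexpnn : (0:ℝ) ≤ Bv ^ (-(120 * (1 + Real.logb 2 ((L:ℝ)+1)))) :=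
        Real.rpow_nonneg hB0.le _
      calc (Bv^(T+1))⁻¹ * (12*((L:ℝ)+1) + 12*(9:ℝ)^T*((L:ℝ)*(φ^2)⁻¹))
          = Bv ^ (-(((T+1 : ℕ)) : ℝ)) * (12*((L:ℝ)+1) + 12*(9:ℝ)^T*((L:ℝ)*(φ^2)⁻¹)) := by
            rw [hinv]
        _ ≤ Bv ^ (-(120 * (1 + Real.logb 2 ((L:ℝ)+1))))
              * (12*((L:ℝ)+1) + 12*(9:ℝ)^T*((L:ℝ)*(φ^2)⁻¹)) :=
            mul_le_mul_of_nonneg_right hrmono hRnn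
        _ ≤ Bv ^ (-(120 * (1 + Real.logb 2 ((L:ℝ)+1))))
              * (120 * (m:ℝ)^3 * (((L:ℝ)+1) ^ (1 + 2 * Real.logb 2 3)) * (φ^2)⁻¹) :=
            mul_le_mul_of_nonneg_left hR hBexpnn
        _ = 120 * (m:ℝ)^3 * (((L:ℝ)+1) ^ (1 + 2 * Real.logb 2 3)) * (φ^2)⁻¹ *
              Bv ^ (-(120 * (1 + Real.logb 2 ((L:ℝ)+1)))) := by ring
    calc 1 / (2 * ((L:ℝ)+1)) * ∑ i : Fin (L+1), Wf p f i
        ≤ ((Bv^(T+1))⁻¹ * (12*((L:ℝ)+1) + 12*(9:ℝ)^T*((L:ℝ)*(φ^2)⁻¹))) * E1 := hmain2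
      _ ≤ (120 * (m:ℝ)^3 * (((L:ℝ)+1) ^ (1 + 2 * Real.logb 2 3)) * (φ^2)⁻¹ *
            Bv ^ (-(120 * (1 + Real.logb 2 ((L:ℝ)+1))))) * E1 :=
          mul_le_mul_of_nonneg_right hfinal hE1nn
      _ = 120 * (m : ℝ) ^ 3 * ((L : ℝ) + 1) ^ (1 + 2 * Real.logb 2 3) * (φ ^ 2)⁻¹ *
            Bv ^ (-(120 * (1 + Real.logb 2 ((L : ℝ) + 1)))) * E1 := by ring
end
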